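/- arXiv:2003.01597 — 4 statements merged into one kernel-verified Lean document; each statement's English description precedes it below -/
import Mathlib

section
/- Let Ω be a compact metric space with distance ρ, let F : [0,∞) → [0,∞) be continuous, and let 𝒱₀ be a 0-symmetric set of finite signed Borel measures ν on Ω with ν(Ω) = 0 such that μ̃ + 𝒱₀ ⊆ 𝒫(Ω) and μ̃ minimizes I_F over μ̃ + 𝒱₀. If a finite signed Borel measure ν is the weak-* limit of a sequence (λ_n ν_n) with λ_n ∈ ℝ and ν_n ∈ 𝒱₀, then ∬_Ω F(ρ(x,y)) dν(x) dν(y) ≥ 0. -/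
open MeasureTheory Topology Filter
open scoped ENNReal NNReal
set_option maxHeartbeats 1000000

/-- The support of a (nonnegative) Borel measure: points all of whose open
neighborhoods have positive measure. -/
def msupp {Ω : Type*} [TopologicalSpace Ω] {m : MeasurableSpace Ω}
    (μ : Measure Ω) : Set Ω :=
  {x | ∀ U : Set Ω, IsOpen U → x ∈ U → μ U ≠ 0}

/-- The interaction energy `I_F(μ) = ∬ F(ρ(x,y)) dμ(x) dμ(y)` of a measure
with respect to a kernel `F` and a distance function `ρ`. -/
noncomputable def energy {Ω : Type*} {m : MeasurableSpace Ω}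
    (F : ℝ → ℝ) (ρ : Ω → Ω → ℝ) (μ : Measure Ω) : ℝ :=
  ∫ x, ∫ y, F (ρ x y) ∂μ ∂μ

/-- The integral of a function against a finite signed measure, via the
Jordan decomposition. -/
noncomputable def sintegral {Ω : Type*} {m : MeasurableSpace Ω}
    (ν : SignedMeasure Ω) (f : Ω → ℝ) : ℝ :=
  ∫ x, f x ∂ν.toJordanDecomposition.posPart
    - ∫ x, f x ∂ν.toJordanDecomposition.negPart

/-- The interaction energy `∬ F(ρ(x,y)) dν(x) dν(y)` of a finite signed
measure `ν`. -/
noncomputable def signedEnergy {Ω : Type*} {m : MeasurableSpace Ω}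
    (F : ℝ → ℝ) (ρ : Ω → Ω → ℝ) (ν : SignedMeasure Ω) : ℝ :=
  sintegral ν (fun x => sintegral ν (fun y => F (ρ x y)))

/-- The Wasserstein `d_∞` distance: infimum over couplings `π` of `μ` and `ν`
of the supremum of `ρ(x,y)` over the support of `π`. -/
noncomputable def dInfty {Ω : Type*} [TopologicalSpace Ω] {m : MeasurableSpace Ω}
    (ρ : Ω → Ω → ℝ) (μ ν : Measure Ω) : ℝ≥0∞ :=
  ⨅ (π : Measure (Ω × Ω)) (_ : π.map Prod.fst = μ ∧ π.map Prod.snd = ν),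
    ⨆ (p : Ω × Ω) (_ : p ∈ msupp π), ENNReal.ofReal (ρ p.1 p.2)

namespace StmtAux
open BoundedContinuousFunction
set_option linter.unusedSectionVars false

variable {Ω : Type*} [MeasurableSpace Ω]


lemma jd_decomp (ν : SignedMeasure Ω) :
    ν = ν.toJordanDecomposition.posPart.toSignedMeasure
        - ν.toJordanDecomposition.negPart.toSignedMeasure :=
  (ν.toSignedMeasure_toJordanDecomposition).symm

lemma sintegral_eq_parts (ν : SignedMeasure Ω) (P N : Measure Ω)
    [IsFiniteMeasure P] [IsFiniteMeasure N]
    (h : ν = P.toSignedMeasure - N.toSignedMeasure)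
    (f : Ω → ℝ) (hf : ∀ (μ : Measure Ω), IsFiniteMeasure μ → Integrable f μ) :
    sintegral ν f = ∫ x, f x ∂P - ∫ x, f x ∂N := by
  have hJ : ν.toJordanDecomposition.posPart.toSignedMeasure
      - ν.toJordanDecomposition.negPart.toSignedMeasure
      = P.toSignedMeasure - N.toSignedMeasure := by
    rw [← jd_decomp]; exact h
  have hadd : ν.toJordanDecomposition.posPart.toSignedMeasure + N.toSignedMeasure
      = P.toSignedMeasure + ν.toJordanDecomposition.negPart.toSignedMeasure :=
    sub_eq_sub_iff_add_eq_add.mp hJ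
  rw [← Measure.toSignedMeasure_add, ← Measure.toSignedMeasure_add] at hadd
  have hM : ν.toJordanDecomposition.posPart + N
      = P + ν.toJordanDecomposition.negPart :=
    Measure.toSignedMeasure_eq_toSignedMeasure_iff.mp hadd
  have e1 : ∫ x, f x ∂(ν.toJordanDecomposition.posPart + N)
      = ∫ x, f x ∂(P + ν.toJordanDecomposition.negPart) := by rw [hM]
  rw [integral_add_measure (hf _ inferInstance) (hf _ inferInstance),
    integral_add_measure (hf _ inferInstance) (hf _ inferInstance)] at e1
  unfold sintegral
  linarith

lemma sintegral_toSM (μ : Measure Ω) [IsFiniteMeasure μ]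
    (f : Ω → ℝ) (hf : ∀ (μ' : Measure Ω), IsFiniteMeasure μ' → Integrable f μ') :
    sintegral μ.toSignedMeasure f = ∫ x, f x ∂μ := by
  rw [sintegral_eq_parts μ.toSignedMeasure μ 0
      (by rw [Measure.toSignedMeasure_zero, sub_zero]) f hf,
    integral_zero_measure, sub_zero]

lemma sintegral_add (s t : SignedMeasure Ω)
    (f : Ω → ℝ) (hf : ∀ (μ : Measure Ω), IsFiniteMeasure μ → Integrable f μ) :
    sintegral (s + t) f = sintegral s f + sintegral t f := by
  have h : s + t
      = (s.toJordanDecomposition.posPart + t.toJordanDecomposition.posPart).toSignedMeasure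
        - (s.toJordanDecomposition.negPart + t.toJordanDecomposition.negPart).toSignedMeasure := by
    rw [Measure.toSignedMeasure_add, Measure.toSignedMeasure_add]
    nth_rewrite 1 [jd_decomp s, jd_decomp t]
    abel
  rw [sintegral_eq_parts _ _ _ h f hf,
    integral_add_measure (hf _ inferInstance) (hf _ inferInstance),
    integral_add_measure (hf _ inferInstance) (hf _ inferInstance)]
  unfold sintegral
  ring

lemma sintegral_neg (s : SignedMeasure Ω) (f : Ω → ℝ) :
    sintegral (-s) f = - sintegral s f := by
  unfold sintegral
  rw [s.toJordanDecomposition_neg, MeasureTheory.JordanDecomposition.neg_posPart,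
    MeasureTheory.JordanDecomposition.neg_negPart]
  ring

lemma sintegral_smul (r : ℝ) (s : SignedMeasure Ω) (f : Ω → ℝ) :
    sintegral (r • s) f = r * sintegral s f := by
  unfold sintegral
  rcases le_or_gt 0 r with hr | hr
  · rw [s.toJordanDecomposition_smul_real,
      MeasureTheory.JordanDecomposition.real_smul_posPart_nonneg _ _ hr,
      MeasureTheory.JordanDecomposition.real_smul_negPart_nonneg _ _ hr,
      integral_smul_nnreal_measure, integral_smul_nnreal_measure]
    simp [NNReal.smul_def, Real.coe_toNNReal r hr]
    ring
  · rw [s.toJordanDecomposition_smul_real,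
      MeasureTheory.JordanDecomposition.real_smul_posPart_neg _ _ hr,
      MeasureTheory.JordanDecomposition.real_smul_negPart_neg _ _ hr,
      integral_smul_nnreal_measure, integral_smul_nnreal_measure]
    simp [NNReal.smul_def, Real.coe_toNNReal (-r) (by linarith)]
    ring



end StmtAux
namespace StmtAux
open BoundedContinuousFunction
set_option linter.unusedSectionVars false
variable {Ω : Type*} [MetricSpace Ω] [CompactSpace Ω] [MeasurableSpace Ω] [BorelSpace Ω]

lemma bcf_integrable (f : Ω →ᵇ ℝ) :
    ∀ (μ : Measure Ω), IsFiniteMeasure μ → Integrable (fun x => f x) μ := by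
  intro μ hμ
  exact f.integrable μ

lemma norm_integral_le (f : Ω →ᵇ ℝ) (μ : Measure Ω) [IsFiniteMeasure μ] :
    ‖∫ x, f x ∂μ‖ ≤ (μ Set.univ).toReal * ‖f‖ := by
  calc ‖∫ x, f x ∂μ‖ ≤ ∫ x, ‖f x‖ ∂μ := norm_integral_le_integral_norm _
    _ ≤ ∫ _, ‖f‖ ∂μ :=
      integral_mono (f.integrable μ).norm (integrable_const _) f.norm_coe_le_norm
    _ = (μ Set.univ).toReal * ‖f‖ := by rw [integral_const, smul_eq_mul, measureReal_def]

/-- sintegral as a continuous linear functional on bounded continuous functions. -/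
noncomputable def TT (ν : SignedMeasure Ω) : (Ω →ᵇ ℝ) →L[ℝ] ℝ :=
  LinearMap.mkContinuous
    { toFun := fun f => sintegral ν (fun x => f x)
      map_add' := by
        intro f g
        unfold sintegral
        simp only [BoundedContinuousFunction.coe_add, Pi.add_apply]
        rw [integral_add (f.integrable _) (g.integrable _),
          integral_add (f.integrable _) (g.integrable _)]
        ring
      map_smul' := by
        intro r f
        unfold sintegral
        simp only [BoundedContinuousFunction.coe_smul, Pi.smul_apply, smul_eq_mul,
          RingHom.id_apply]
        rw [MeasureTheory.integral_const_mul, MeasureTheory.integral_const_mul]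
        ring }
    ((ν.toJordanDecomposition.posPart Set.univ).toReal
      + (ν.toJordanDecomposition.negPart Set.univ).toReal)
    (by
      intro f
      simp only [LinearMap.coe_mk, AddHom.coe_mk]
      unfold sintegral
      calc ‖∫ x, f x ∂ν.toJordanDecomposition.posPart
            - ∫ x, f x ∂ν.toJordanDecomposition.negPart‖
          ≤ ‖∫ x, f x ∂ν.toJordanDecomposition.posPart‖
            + ‖∫ x, f x ∂ν.toJordanDecomposition.negPart‖ := norm_sub_le _ _
        _ ≤ (ν.toJordanDecomposition.posPart Set.univ).toReal * ‖f‖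
            + (ν.toJordanDecomposition.negPart Set.univ).toReal * ‖f‖ :=
          add_le_add (norm_integral_le f _) (norm_integral_le f _)
        _ = _ := by ring)

lemma TT_apply (ν : SignedMeasure Ω) (f : Ω →ᵇ ℝ) :
    TT ν f = sintegral ν (fun x => f x) := rfl

variable {K : Ω → Ω → ℝ}

/-- The slices of a continuous kernel, as a continuous family of b.c. functions. -/
noncomputable def kx (hK : Continuous fun p : Ω × Ω => K p.1 p.2) (x : Ω) : Ω →ᵇ ℝ :=
  mkOfCompact ⟨fun y => K x y, hK.comp (Continuous.prodMk_right x)⟩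

lemma kx_apply (hK : Continuous fun p : Ω × Ω => K p.1 p.2) (x y : Ω) :
    kx hK x y = K x y := rfl

lemma kx_continuous (hK : Continuous fun p : Ω × Ω => K p.1 p.2) :
    Continuous (kx hK) := by
  rw [Metric.continuous_iff]
  intro x ε hε
  have hUC : UniformContinuous fun p : Ω × Ω => K p.1 p.2 :=
    CompactSpace.uniformContinuous_of_continuous hK
  rw [Metric.uniformContinuous_iff] at hUC
  obtain ⟨δ, hδ, hδ'⟩ := hUC (ε / 2) (by linarith)
  refine ⟨δ, hδ, fun x' hx' => ?_⟩
  have : dist (kx hK x') (kx hK x) ≤ ε / 2 := by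
    rw [BoundedContinuousFunction.dist_le (by linarith)]
    intro y
    have : dist ((x', y) : Ω × Ω) (x, y) < δ := by
      rw [Prod.dist_eq]
      exact max_lt hx' (by simp [hδ])
    exact le_of_lt (hδ' this)
  linarith

/-- The potential of a signed measure. -/
noncomputable def GG (hK : Continuous fun p : Ω × Ω => K p.1 p.2)
    (ν : SignedMeasure Ω) : Ω →ᵇ ℝ :=
  mkOfCompact ⟨fun x => TT ν (kx hK x), (TT ν).continuous.comp (kx_continuous hK)⟩

lemma GG_apply (hK : Continuous fun p : Ω × Ω => K p.1 p.2) (ν : SignedMeasure Ω) (x : Ω) :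
    GG hK ν x = TT ν (kx hK x) := rfl

lemma GG_apply' (hK : Continuous fun p : Ω × Ω => K p.1 p.2) (ν : SignedMeasure Ω) (x : Ω) :
    GG hK ν x = sintegral ν (fun y => K x y) := rfl


lemma double_swap (hK : Continuous fun p : Ω × Ω => K p.1 p.2)
    (hKs : ∀ x y, K x y = K y x) (μ μ' : Measure Ω)
    [IsFiniteMeasure μ] [IsFiniteMeasure μ'] :
    ∫ x, ∫ y, K x y ∂μ' ∂μ = ∫ x, ∫ y, K x y ∂μ ∂μ' := by
  have hint : Integrable (Function.uncurry K) (μ.prod μ') :=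
    (mkOfCompact ⟨fun p : Ω × Ω => K p.1 p.2, hK⟩).integrable _
  rw [MeasureTheory.integral_integral_swap hint]
  refine integral_congr_ae (Filter.Eventually.of_forall fun a => ?_)
  refine integral_congr_ae (Filter.Eventually.of_forall fun b => ?_)
  exact hKs b a

lemma GG_toSM (hK : Continuous fun p : Ω × Ω => K p.1 p.2)
    (μ : Measure Ω) [IsFiniteMeasure μ] (x : Ω) :
    GG hK μ.toSignedMeasure x = ∫ y, K x y ∂μ := by
  rw [GG_apply']
  exact sintegral_toSM μ _ (bcf_integrable (kx hK x))

lemma int_GG_toSM (hK : Continuous fun p : Ω × Ω => K p.1 p.2)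
    (μ' μ : Measure Ω) [IsFiniteMeasure μ'] [IsFiniteMeasure μ] :
    ∫ x, GG hK μ'.toSignedMeasure x ∂μ = ∫ x, ∫ y, K x y ∂μ' ∂μ :=
  integral_congr_ae (Filter.Eventually.of_forall fun x => GG_toSM hK μ' x)

lemma int_GG_split (hK : Continuous fun p : Ω × Ω => K p.1 p.2)
    (u : SignedMeasure Ω) (μ : Measure Ω) [IsFiniteMeasure μ] :
    ∫ x, GG hK u x ∂μ
      = (∫ x, ∫ y, K x y ∂u.toJordanDecomposition.posPart ∂μ)
        - ∫ x, ∫ y, K x y ∂u.toJordanDecomposition.negPart ∂μ := by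
  have h1 : (fun x => GG hK u x)
      = fun x => GG hK u.toJordanDecomposition.posPart.toSignedMeasure x
          - GG hK u.toJordanDecomposition.negPart.toSignedMeasure x := by
    funext x
    rw [GG_apply' hK u, GG_toSM, GG_toSM]
    rfl
  calc ∫ x, GG hK u x ∂μ
      = ∫ x, (GG hK u.toJordanDecomposition.posPart.toSignedMeasure x
          - GG hK u.toJordanDecomposition.negPart.toSignedMeasure x) ∂μ := by rw [h1]
    _ = (∫ x, GG hK u.toJordanDecomposition.posPart.toSignedMeasure x ∂μ)
          - ∫ x, GG hK u.toJordanDecomposition.negPart.toSignedMeasure x ∂μ :=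
        integral_sub ((GG hK _).integrable μ) ((GG hK _).integrable μ)
    _ = _ := by rw [int_GG_toSM, int_GG_toSM]

lemma B_expand (hK : Continuous fun p : Ω × Ω => K p.1 p.2) (s t : SignedMeasure Ω) :
    TT s (GG hK t)
      = ((∫ x, ∫ y, K x y ∂t.toJordanDecomposition.posPart ∂s.toJordanDecomposition.posPart)
          - ∫ x, ∫ y, K x y ∂t.toJordanDecomposition.negPart ∂s.toJordanDecomposition.posPart)
        - ((∫ x, ∫ y, K x y ∂t.toJordanDecomposition.posPart ∂s.toJordanDecomposition.negPart)
          - ∫ x, ∫ y, K x y ∂t.toJordanDecomposition.negPart ∂s.toJordanDecomposition.negPart) := by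
  have h0 : TT s (GG hK t)
      = (∫ x, GG hK t x ∂s.toJordanDecomposition.posPart)
        - ∫ x, GG hK t x ∂s.toJordanDecomposition.negPart := TT_apply s (GG hK t)
  rw [h0, int_GG_split, int_GG_split]

lemma B_symm (hK : Continuous fun p : Ω × Ω => K p.1 p.2)
    (hKs : ∀ x y, K x y = K y x) (s t : SignedMeasure Ω) :
    TT s (GG hK t) = TT t (GG hK s) := by
  rw [B_expand hK s t, B_expand hK t s,
    double_swap hK hKs s.toJordanDecomposition.posPart t.toJordanDecomposition.posPart,
    double_swap hK hKs s.toJordanDecomposition.posPart t.toJordanDecomposition.negPart,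
    double_swap hK hKs s.toJordanDecomposition.negPart t.toJordanDecomposition.posPart,
    double_swap hK hKs s.toJordanDecomposition.negPart t.toJordanDecomposition.negPart]
  ring

lemma GG_add (hK : Continuous fun p : Ω × Ω => K p.1 p.2) (s t : SignedMeasure Ω) :
    GG hK (s + t) = GG hK s + GG hK t := by
  ext x
  simp only [BoundedContinuousFunction.coe_add, Pi.add_apply]
  rw [GG_apply', GG_apply', GG_apply']
  exact sintegral_add s t _ (bcf_integrable (kx hK x))

lemma GG_neg (hK : Continuous fun p : Ω × Ω => K p.1 p.2) (s : SignedMeasure Ω) :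
    GG hK (-s) = -(GG hK s) := by
  ext x
  simp only [BoundedContinuousFunction.coe_neg, Pi.neg_apply]
  rw [GG_apply', GG_apply']
  exact sintegral_neg s _

lemma GG_smul (hK : Continuous fun p : Ω × Ω => K p.1 p.2) (r : ℝ) (s : SignedMeasure Ω) :
    GG hK (r • s) = r • GG hK s := by
  ext x
  simp only [BoundedContinuousFunction.coe_smul, Pi.smul_apply, smul_eq_mul]
  rw [GG_apply', GG_apply']
  exact sintegral_smul r s _

lemma TT_add_meas (s t : SignedMeasure Ω) (f : Ω →ᵇ ℝ) :
    TT (s + t) f = TT s f + TT t f := by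
  rw [TT_apply, TT_apply, TT_apply]
  exact sintegral_add s t _ (bcf_integrable f)

lemma TT_neg_meas (s : SignedMeasure Ω) (f : Ω →ᵇ ℝ) :
    TT (-s) f = -(TT s f) := by
  rw [TT_apply, TT_apply]; exact sintegral_neg s _

lemma TT_smul_meas (r : ℝ) (s : SignedMeasure Ω) (f : Ω →ᵇ ℝ) :
    TT (r • s) f = r * TT s f := by
  rw [TT_apply, TT_apply]; exact sintegral_smul r s _

lemma quad_expand (hK : Continuous fun p : Ω × Ω => K p.1 p.2) (s t : SignedMeasure Ω) :
    TT (s + t) (GG hK (s + t))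
      = TT s (GG hK s) + TT s (GG hK t) + TT t (GG hK s) + TT t (GG hK t) := by
  rw [GG_add, TT_add_meas, map_add, map_add]
  ring

lemma quad_smul (hK : Continuous fun p : Ω × Ω => K p.1 p.2) (r : ℝ) (s : SignedMeasure Ω) :
    TT (r • s) (GG hK (r • s)) = r * (r * TT s (GG hK s)) := by
  rw [GG_smul, TT_smul_meas, _root_.map_smul, smul_eq_mul]


end StmtAux

/-- Lemma on second-order conditions, weak-* closure.
If `μ̃` minimizes `I_F` over `μ̃ + 𝒱₀` as before, and a finite signed Borel
measure `ν` is the weak-* limit of a sequence `λ_n ν_n` with `λ_n ∈ ℝ` and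
`ν_n ∈ 𝒱₀`, then `∬ F(ρ(x,y)) dν(x) dν(y) ≥ 0`. -/
theorem stmt_1 {Ω : Type*} [MetricSpace Ω] [CompactSpace Ω]
    [MeasurableSpace Ω] [BorelSpace Ω]
    (F : ℝ → ℝ) (hF_cont : ContinuousOn F (Set.Ici 0))
    (hF_nonneg : ∀ t ∈ Set.Ici (0 : ℝ), 0 ≤ F t)
    (V0 : Set (SignedMeasure Ω))
    (hV0_symm : ∀ ν ∈ V0, -ν ∈ V0)
    (hV0_zero : ∀ ν ∈ V0, ν Set.univ = 0)
    (μt : Measure Ω) [IsProbabilityMeasure μt]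
    (hV0_prob : ∀ ν ∈ V0, 0 ≤ μt.toSignedMeasure + ν)
    (hmin : ∀ ν ∈ V0,
      signedEnergy F dist μt.toSignedMeasure ≤
        signedEnergy F dist (μt.toSignedMeasure + ν))
    (ν : SignedMeasure Ω) (lam : ℕ → ℝ) (νs : ℕ → SignedMeasure Ω)
    (hνs : ∀ n, νs n ∈ V0)
    (hlim : ∀ f : BoundedContinuousFunction Ω ℝ,
      Tendsto (fun n => sintegral (lam n • νs n) (fun x => f x)) atTop
        (𝓝 (sintegral ν (fun x => f x)))) :
    0 ≤ signedEnergy F dist ν := by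
  classical
  set K : Ω → Ω → ℝ := fun x y => F (dist x y) with hKdef
  have hK : Continuous fun p : Ω × Ω => K p.1 p.2 :=
    hF_cont.comp_continuous continuous_dist fun p => dist_nonneg
  have hKs : ∀ x y, K x y = K y x := fun x y => by
    simp only [hKdef]; rw [dist_comm]
  -- energy as a "quadratic form"
  have hE : ∀ s : SignedMeasure Ω,
      signedEnergy F dist s = StmtAux.TT s (StmtAux.GG hK s) := fun s => rfl
  -- Step 1: nonnegativity of the energy on V0
  have step1 : ∀ ν₀ ∈ V0, 0 ≤ StmtAux.TT ν₀ (StmtAux.GG hK ν₀) := by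
    intro ν₀ h₀
    have h1 := hmin ν₀ h₀
    have h2 := hmin (-ν₀) (hV0_symm ν₀ h₀)
    rw [hE, hE, StmtAux.quad_expand hK] at h1
    rw [hE, hE, StmtAux.quad_expand hK] at h2
    simp only [StmtAux.GG_neg hK, StmtAux.TT_neg_meas, _root_.map_neg, neg_neg] at h2
    linarith
  -- Step 2: nonnegativity along the approximating sequence
  have step2 : ∀ n, 0 ≤ StmtAux.TT (lam n • νs n) (StmtAux.GG hK (lam n • νs n)) := by
    intro n
    rw [StmtAux.quad_smul, ← mul_assoc]
    exact mul_nonneg (mul_self_nonneg _) (step1 (νs n) (hνs n))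
  -- weak-* convergence of the functionals
  have hconv : ∀ f : BoundedContinuousFunction Ω ℝ,
      Tendsto (fun n => StmtAux.TT (lam n • νs n) f) atTop (𝓝 (StmtAux.TT ν f)) := by
    intro f
    simpa only [StmtAux.TT_apply] using hlim f
  -- Banach–Steinhaus: uniform bound on the functionals
  have hpt : ∀ f : BoundedContinuousFunction Ω ℝ, ∃ C, ∀ n : ℕ, ‖StmtAux.TT (lam n • νs n) f‖ ≤ C := by
    intro f
    obtain ⟨C, hC⟩ := (hconv f).norm.bddAbove_range
    exact ⟨C, fun n => hC (Set.mem_range_self n)⟩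
  obtain ⟨C, hC⟩ := banach_steinhaus hpt
  have hC0 : (0:ℝ) ≤ C := le_trans (norm_nonneg _) (hC 0)
  set M : ℝ := C + ‖StmtAux.TT ν‖ with hMdef
  have hM0 : 0 ≤ M := by rw [hMdef]; positivity
  -- uniform convergence of the potentials
  have hGnorm : Tendsto (fun n => ‖StmtAux.GG hK ν - StmtAux.GG hK (lam n • νs n)‖)
      atTop (𝓝 0) := by
    rw [NormedAddCommGroup.tendsto_nhds_zero]
    intro ε hε
    have hδ : (0:ℝ) < ε / (2 * (M + 1)) := by positivity
    obtain ⟨t, htfin, htcov⟩ := Metric.totallyBounded_iff.mp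
      ((isCompact_range (StmtAux.kx_continuous hK)).totallyBounded) _ hδ
    have hball : ∀ f₀ ∈ t, ∀ᶠ n in atTop,
        ‖StmtAux.TT ν f₀ - StmtAux.TT (lam n • νs n) f₀‖ < ε / 2 := by
      intro f₀ _
      have htd : Tendsto (fun n => StmtAux.TT ν f₀ - StmtAux.TT (lam n • νs n) f₀)
          atTop (𝓝 0) := by
        have h' := (tendsto_const_nhds (x := StmtAux.TT ν f₀) (f := atTop (α := ℕ))).sub
          (hconv f₀)
        simpa using h'
      exact (tendsto_zero_iff_norm_tendsto_zero.mp htd).eventually_lt_const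
        (by positivity)
    have hall := (htfin.eventually_all).mpr hball
    filter_upwards [hall] with n hn
    rw [norm_norm]
    have hδM : M * (ε / (2 * (M + 1))) + ε / 2 < ε := by
      have hident : ε / (2 * (M + 1)) * (2 * (M + 1)) = ε :=
        div_mul_cancel₀ _ (by positivity)
      nlinarith [hδ, hM0]
    refine lt_of_le_of_lt ?_ hδM
    rw [BoundedContinuousFunction.norm_le (by positivity)]
    intro x
    obtain ⟨f₀, hf₀t, hf₀d⟩ : ∃ f₀, f₀ ∈ t ∧ dist (StmtAux.kx hK x) f₀ < ε / (2 * (M + 1)) := by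
      have hx := htcov (Set.mem_range_self x)
      simp only [Set.mem_iUnion, Metric.mem_ball] at hx
      obtain ⟨f₀, hf₀, hd⟩ := hx
      exact ⟨f₀, hf₀, hd⟩
    have hGx : (StmtAux.GG hK ν - StmtAux.GG hK (lam n • νs n)) x
        = StmtAux.TT ν (StmtAux.kx hK x) - StmtAux.TT (lam n • νs n) (StmtAux.kx hK x) := by
      simp only [BoundedContinuousFunction.coe_sub, Pi.sub_apply, StmtAux.GG_apply]
    rw [hGx]
    have hdnorm : ‖StmtAux.kx hK x - f₀‖ ≤ ε / (2 * (M + 1)) := by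
      rw [← dist_eq_norm]
      exact le_of_lt hf₀d
    have e1 : StmtAux.TT ν (StmtAux.kx hK x) - StmtAux.TT (lam n • νs n) (StmtAux.kx hK x)
        = (StmtAux.TT ν (StmtAux.kx hK x - f₀)
            - StmtAux.TT (lam n • νs n) (StmtAux.kx hK x - f₀))
          + (StmtAux.TT ν f₀ - StmtAux.TT (lam n • νs n) f₀) := by
      rw [map_sub, map_sub]
      ring
    rw [e1]
    calc ‖(StmtAux.TT ν (StmtAux.kx hK x - f₀)
            - StmtAux.TT (lam n • νs n) (StmtAux.kx hK x - f₀))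
          + (StmtAux.TT ν f₀ - StmtAux.TT (lam n • νs n) f₀)‖
        ≤ ‖StmtAux.TT ν (StmtAux.kx hK x - f₀)
            - StmtAux.TT (lam n • νs n) (StmtAux.kx hK x - f₀)‖
          + ‖StmtAux.TT ν f₀ - StmtAux.TT (lam n • νs n) f₀‖ := norm_add_le _ _
      _ ≤ (‖StmtAux.TT ν (StmtAux.kx hK x - f₀)‖
            + ‖StmtAux.TT (lam n • νs n) (StmtAux.kx hK x - f₀)‖)
          + ‖StmtAux.TT ν f₀ - StmtAux.TT (lam n • νs n) f₀‖ :=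
        add_le_add_left (norm_sub_le _ _) _
      _ ≤ (‖StmtAux.TT ν‖ * ‖StmtAux.kx hK x - f₀‖
            + ‖StmtAux.TT (lam n • νs n)‖ * ‖StmtAux.kx hK x - f₀‖)
          + ε / 2 := by
        refine add_le_add (add_le_add ?_ ?_) (le_of_lt (hn f₀ hf₀t))
        · exact ContinuousLinearMap.le_opNorm _ _
        · exact ContinuousLinearMap.le_opNorm _ _
      _ ≤ M * (ε / (2 * (M + 1))) + ε / 2 := by
        have b1 : ‖StmtAux.TT ν‖ * ‖StmtAux.kx hK x - f₀‖
            ≤ ‖StmtAux.TT ν‖ * (ε / (2 * (M + 1))) :=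
          mul_le_mul_of_nonneg_left hdnorm (ContinuousLinearMap.opNorm_nonneg _)
        have b2 : ‖StmtAux.TT (lam n • νs n)‖ * ‖StmtAux.kx hK x - f₀‖
            ≤ C * (ε / (2 * (M + 1))) :=
          mul_le_mul (hC n) hdnorm (norm_nonneg _) hC0
        have : ‖StmtAux.TT ν‖ * (ε / (2 * (M + 1))) + C * (ε / (2 * (M + 1)))
            = M * (ε / (2 * (M + 1))) := by rw [hMdef]; ring
        linarith
  -- passage to the limit
  have hdiff : Tendsto (fun n => StmtAux.TT (lam n • νs n) (StmtAux.GG hK ν)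
      - StmtAux.TT (lam n • νs n) (StmtAux.GG hK (lam n • νs n))) atTop (𝓝 0) := by
    apply squeeze_zero_norm
      (a := fun n => C * ‖StmtAux.GG hK ν - StmtAux.GG hK (lam n • νs n)‖)
    · intro n
      rw [← map_sub]
      calc ‖StmtAux.TT (lam n • νs n) (StmtAux.GG hK ν - StmtAux.GG hK (lam n • νs n))‖
          ≤ ‖StmtAux.TT (lam n • νs n)‖
              * ‖StmtAux.GG hK ν - StmtAux.GG hK (lam n • νs n)‖ :=
            ContinuousLinearMap.le_opNorm _ _
        _ ≤ C * ‖StmtAux.GG hK ν - StmtAux.GG hK (lam n • νs n)‖ :=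
            mul_le_mul_of_nonneg_right (hC n) (norm_nonneg _)
    · simpa using hGnorm.const_mul C
  have hb : Tendsto (fun n => StmtAux.TT (lam n • νs n) (StmtAux.GG hK (lam n • νs n)))
      atTop (𝓝 (StmtAux.TT ν (StmtAux.GG hK ν))) := by
    have h' := (hconv (StmtAux.GG hK ν)).sub hdiff
    simpa using h'
  rw [hE]
  exact ge_of_tendsto' hb step2
end

section
/- Let Ω be a compact metric space with distance ρ and let F : [0,∞) → [0,∞) be continuous. If μ̃ ∈ 𝒫(Ω) is a local minimizer of I_F in the weak-* topology, then the potential x ↦ ∫_Ω F(ρ(x,y)) dμ̃(y) is constant on supp μ̃; consequently, for every finite signed Borel measure ν with ν(Ω) = 0 and supp ν ⊆ supp μ̃, one has ∬_Ω F(ρ(x,y)) dμ̃(x) dν(y) = 0. -/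
open MeasureTheory Topology Filter
open scoped ENNReal NNReal

lemma msupp_compl_null {Ω : Type*} [TopologicalSpace Ω] [SecondCountableTopology Ω]
    {m : MeasurableSpace Ω} (μ : Measure Ω) :
    μ (msupp μ)ᶜ = 0 := by
  set S : Set (Set Ω) := {U | IsOpen U ∧ μ U = 0} with hS
  have hsub : (msupp μ)ᶜ ⊆ ⋃₀ S := by
    intro x hx
    simp only [msupp, Set.mem_compl_iff, Set.mem_setOf_eq, not_forall] at hx
    obtain ⟨U, hUo, hxU, hU0⟩ := hx
    exact ⟨U, ⟨hUo, not_not.mp hU0⟩, hxU⟩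
  obtain ⟨T, hTc, hTS, hTU⟩ := TopologicalSpace.isOpen_sUnion_countable S (fun s hs => hs.1)
  refine measure_mono_null (hsub.trans hTU.symm.subset) ?_
  exact (measure_sUnion_null_iff hTc).mpr (fun s hs => (hTS hs).2)

lemma cont_integrable {Ω : Type*} [MetricSpace Ω] [CompactSpace Ω]
    [MeasurableSpace Ω] [BorelSpace Ω] {f : Ω → ℝ} (hf : Continuous f)
    (μ : Measure Ω) [IsFiniteMeasure μ] : Integrable f μ :=
  hf.integrable_of_hasCompactSupport
    (IsCompact.of_isClosed_subset isCompact_univ (isClosed_tsupport f) (Set.subset_univ _))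


/-- constancy of the potential on the support.
If `μ̃` is a local weak-* minimizer of `I_F`, then the potential
`x ↦ ∫ F(ρ(x,y)) dμ̃(y)` is constant on `supp μ̃`; consequently
`∬ F(ρ(x,y)) dμ̃(x) dν(y) = 0` for every finite signed Borel measure `ν` with
`ν(Ω) = 0` and `supp ν ⊆ supp μ̃`. -/
theorem stmt_4 {Ω : Type*} [MetricSpace Ω] [CompactSpace Ω]
    [MeasurableSpace Ω] [BorelSpace Ω]
    (F : ℝ → ℝ) (hF_cont : ContinuousOn F (Set.Ici 0))
    (hF_nonneg : ∀ t ∈ Set.Ici (0 : ℝ), 0 ≤ F t)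
    (μt : ProbabilityMeasure Ω)
    (hmin : ∃ U ∈ 𝓝 μt, ∀ μ ∈ U,
      energy F dist (μt : Measure Ω) ≤ energy F dist (μ : Measure Ω)) :
    (∀ x ∈ msupp (μt : Measure Ω), ∀ x' ∈ msupp (μt : Measure Ω),
        ∫ y, F (dist x y) ∂(μt : Measure Ω) = ∫ y, F (dist x' y) ∂(μt : Measure Ω)) ∧
    (∀ ν : SignedMeasure Ω, ν Set.univ = 0 →
      msupp ν.totalVariation ⊆ msupp (μt : Measure Ω) →
      sintegral ν (fun y => ∫ x, F (dist x y) ∂(μt : Measure Ω)) = 0) := by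
  classical
  obtain ⟨U, hU, hUmin⟩ := hmin
  set μ : Measure Ω := (μt : Measure Ω) with hμdef
  have hK : Continuous (fun p : Ω × Ω => F (dist p.1 p.2)) :=
    hF_cont.comp_continuous (continuous_fst.dist continuous_snd) (fun p => dist_nonneg)
  have hKx : ∀ x, Continuous (fun y => F (dist x y)) :=
    fun x => hK.comp (continuous_const.prodMk continuous_id)
  have hKy : ∀ y, Continuous (fun x => F (dist x y)) :=
    fun y => hK.comp (continuous_id.prodMk continuous_const)
  set V : Ω → ℝ := fun x => ∫ y, F (dist x y) ∂μ with hVdef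
  have hVcont : Continuous V := by
    have h := continuous_parametric_integral_of_continuous (μ := μ)
      (f := fun x y : Ω => F (dist x y)) hK isCompact_univ
    simpa [Measure.restrict_univ] using h
  set E : ℝ := energy F dist μ with hEdef
  have hEV : E = ∫ x, V x ∂μ := rfl
  -- key inequality : E ≤ V x₀ for every x₀
  have key : ∀ x₀ : Ω, E ≤ V x₀ := by
    intro x₀
    set σ : Measure Ω := Measure.dirac x₀ with hσdef
    set mt : ℝ → Measure Ω := fun t => ENNReal.ofReal (1-t) • μ + ENNReal.ofReal t • σ
      with hmtdef
    have hprob : ∀ t ∈ Set.Icc (0:ℝ) 1, IsProbabilityMeasure (mt t) := by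
      intro t ht
      constructor
      simp only [hmtdef, Measure.coe_add, Pi.add_apply, Measure.coe_smul, Pi.smul_apply,
        smul_eq_mul, measure_univ, mul_one]
      rw [← ENNReal.ofReal_add (by linarith [ht.2]) ht.1]
      norm_num
    have hint : ∀ t ∈ Set.Icc (0:ℝ) 1, ∀ (f : Ω → ℝ), Continuous f →
        ∫ x, f x ∂(mt t) = (1-t) * ∫ x, f x ∂μ + t * f x₀ := by
      intro t ht f hf
      rw [hmtdef]
      rw [integral_add_measure ((cont_integrable hf μ).smul_measure ENNReal.ofReal_ne_top)
        ((cont_integrable hf σ).smul_measure ENNReal.ofReal_ne_top),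
        integral_smul_measure, integral_smul_measure,
        ENNReal.toReal_ofReal (by linarith [ht.2]), ENNReal.toReal_ofReal ht.1,
        hσdef, integral_dirac]
      simp [smul_eq_mul]
    set p : ℝ → ProbabilityMeasure Ω := fun t =>
      if h : t ∈ Set.Icc (0:ℝ) 1 then ⟨mt t, hprob t h⟩ else μt with hpdef
    have hpcoe : ∀ t ∈ Set.Icc (0:ℝ) 1, (p t : Measure Ω) = mt t := by
      intro t ht
      show (↑(if h : t ∈ Set.Icc (0:ℝ) 1 then (⟨mt t, hprob t h⟩ : ProbabilityMeasure Ω) else μt) : Measure Ω) = mt t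
      exact congrArg (fun q : ProbabilityMeasure Ω => (q : Measure Ω)) (dif_pos ht)
    have hIoc : Set.Ioc (0:ℝ) 1 ∈ 𝓝[>] (0:ℝ) :=
      Ioc_mem_nhdsGT_of_mem (by norm_num : (0:ℝ) ∈ Set.Ico (0:ℝ) 1)
    have htend : Tendsto p (𝓝[>] (0:ℝ)) (𝓝 μt) := by
      rw [ProbabilityMeasure.tendsto_iff_forall_integral_tendsto]
      intro f
      have hev : ∀ᶠ t in 𝓝[>] (0:ℝ),
          (1-t) * ∫ x, f x ∂μ + t * f x₀ = ∫ x, f x ∂(p t : Measure Ω) := by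
        filter_upwards [hIoc] with t ht
        have ht' : t ∈ Set.Icc (0:ℝ) 1 := ⟨le_of_lt ht.1, ht.2⟩
        rw [hpcoe t ht', hint t ht' _ f.continuous]
      have hcont : Tendsto (fun t : ℝ => (1-t) * ∫ x, f x ∂μ + t * f x₀)
          (𝓝[>] (0:ℝ)) (𝓝 (∫ x, f x ∂μ)) := by
        have : Tendsto (fun t : ℝ => (1-t) * ∫ x, f x ∂μ + t * f x₀)
            (𝓝 (0:ℝ)) (𝓝 ((1-0) * ∫ x, f x ∂μ + 0 * f x₀)) :=
          Continuous.tendsto (by fun_prop) 0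
        simpa using this.mono_left nhdsWithin_le_nhds
      exact hcont.congr' hev
    have henergy : ∀ t ∈ Set.Icc (0:ℝ) 1, energy F dist (mt t)
        = (1-t) * ((1-t)*E + t * V x₀) + t * ((1-t) * V x₀ + t * F 0) := by
      intro t ht
      have hVx₀' : ∫ x, F (dist x x₀) ∂μ = V x₀ := by
        have h1 : (fun x => F (dist x x₀)) = fun x => F (dist x₀ x) :=
          funext fun x => by rw [dist_comm]
        rw [h1]
      have inner : ∀ x, ∫ y, F (dist x y) ∂(mt t) = (1-t) * V x + t * F (dist x x₀) :=
        fun x => hint t ht _ (hKx x)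
      have hgc : Continuous (fun x => (1-t) * V x + t * F (dist x x₀)) :=
        (continuous_const.mul hVcont).add (continuous_const.mul (hKy x₀))
      unfold energy
      simp only [inner]
      rw [hint t ht _ hgc,
        integral_add ((cont_integrable hVcont μ).const_mul _)
          ((cont_integrable (hKy x₀) μ).const_mul _),
        integral_const_mul, integral_const_mul, hVx₀', dist_self, ← hEV]
    have hUev : ∀ᶠ t in 𝓝[>] (0:ℝ), p t ∈ U := htend hU
    have hineq : ∀ᶠ t in 𝓝[>] (0:ℝ),
        0 ≤ (t-2)*E + 2*(1-t)*(V x₀) + t * F 0 := by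
      filter_upwards [hUev, hIoc] with t htU ht
      have ht' : t ∈ Set.Icc (0:ℝ) 1 := ⟨le_of_lt ht.1, ht.2⟩
      have h1 : E ≤ energy F dist (p t : Measure Ω) := hUmin _ htU
      rw [hpcoe t ht', henergy t ht'] at h1
      have hexp : (1-t) * ((1-t)*E + t * V x₀) + t * ((1-t) * V x₀ + t * F 0) - E
          = t * ((t-2)*E + 2*(1-t)*(V x₀) + t * F 0) := by ring
      have h2 : 0 ≤ t * ((t-2)*E + 2*(1-t)*(V x₀) + t * F 0) := by linarith
      exact nonneg_of_mul_nonneg_right h2 ht.1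
    have hlim : Tendsto (fun t : ℝ => (t-2)*E + 2*(1-t)*(V x₀) + t * F 0)
        (𝓝[>] (0:ℝ)) (𝓝 ((0-2)*E + 2*(1-0)*(V x₀) + 0 * F 0)) := by
      have : Tendsto (fun t : ℝ => (t-2)*E + 2*(1-t)*(V x₀) + t * F 0)
          (𝓝 (0:ℝ)) (𝓝 ((0-2)*E + 2*(1-0)*(V x₀) + 0 * F 0)) :=
        Continuous.tendsto (by fun_prop) 0
      exact this.mono_left nhdsWithin_le_nhds
    have h0 : (0:ℝ) ≤ (0-2)*E + 2*(1-0)*(V x₀) + 0 * F 0 := ge_of_tendsto hlim hineq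
    linarith
  -- equality on the support
  have hsupp : ∀ x ∈ msupp μ, V x = E := by
    intro x hx
    by_contra hne
    have hlt : E < V x := lt_of_le_of_ne (key x) (Ne.symm hne)
    set c : ℝ := (E + V x)/2 with hcdef
    have hc1 : E < c := by rw [hcdef]; linarith
    have hc2 : c < V x := by rw [hcdef]; linarith
    set G : Set Ω := V ⁻¹' Set.Ioi c with hGdef
    have hGo : IsOpen G := isOpen_Ioi.preimage hVcont
    have hxG : x ∈ G := hc2
    have hGpos : μ G ≠ 0 := hx G hGo hxG
    have hVint : Integrable V μ := cont_integrable hVcont μ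
    have h1 : E = ∫ y in G, V y ∂μ + ∫ y in Gᶜ, V y ∂μ := by
      rw [hEV, ← integral_add_compl hGo.measurableSet hVint]
    have h2 : c * (μ G).toReal ≤ ∫ y in G, V y ∂μ := by
      have := setIntegral_ge_of_const_le hGo.measurableSet (measure_ne_top μ G)
        (fun y hy => le_of_lt hy) hVint.integrableOn
      rw [smul_eq_mul, mul_comm] at this
      exact this
    have h3 : E * (μ Gᶜ).toReal ≤ ∫ y in Gᶜ, V y ∂μ := by
      have := setIntegral_ge_of_const_le hGo.measurableSet.compl (measure_ne_top μ Gᶜ)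
        (fun y _ => key y) hVint.integrableOn
      rw [smul_eq_mul, mul_comm] at this
      exact this
    have hsum : (μ G).toReal + (μ Gᶜ).toReal = 1 := by
      rw [← ENNReal.toReal_add (measure_ne_top _ _) (measure_ne_top _ _),
        measure_add_measure_compl hGo.measurableSet]
      simp
    have hGpos' : 0 < (μ G).toReal := ENNReal.toReal_pos hGpos (measure_ne_top _ _)
    have hb : (μ Gᶜ).toReal = 1 - (μ G).toReal := by linarith
    have e1 : E * (μ Gᶜ).toReal = E * 1 - E * (μ G).toReal := by rw [hb]; ring
    have e2 : c * (μ G).toReal - E * (μ G).toReal = (c - E) * (μ G).toReal := by ring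
    linarith [mul_pos (sub_pos.mpr hc1) hGpos']
  constructor
  · intro x hx x' hx'
    have := (hsupp x hx).trans (hsupp x' hx').symm
    exact this
  · intro ν hν0 hνsupp
    set νp := ν.toJordanDecomposition.posPart with hνp
    set νn := ν.toJordanDecomposition.negPart with hνn
    have hWV : (fun y => ∫ x, F (dist x y) ∂μ) = V := by
      funext y
      have h1 : (fun x => F (dist x y)) = fun x => F (dist y x) :=
        funext fun x => by rw [dist_comm]
      rw [h1]
    have hκint : ∀ (κ : Measure Ω) [IsFiniteMeasure κ], κ ≤ ν.totalVariation →
        ∫ x, V x ∂κ = E * (κ Set.univ).toReal := by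
      intro κ _ hκ
      have hnull : κ {x | ¬ V x = E} = 0 := by
        refine measure_mono_null (fun x hx hmem => hx (hsupp x (hνsupp hmem))) ?_
        exact le_antisymm ((Measure.le_iff'.mp hκ _).trans_eq
          (msupp_compl_null ν.totalVariation)) zero_le
      have hae : V =ᵐ[κ] fun _ => E := by
        rw [Filter.EventuallyEq, ae_iff]
        simpa using hnull
      rw [integral_congr_ae hae, integral_const, smul_eq_mul, mul_comm]
      rfl
    have hp1 : νp ≤ ν.totalVariation := Measure.le_add_right le_rfl
    have hn1 : νn ≤ ν.totalVariation := Measure.le_add_left le_rfl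
    have happ : ν Set.univ = (νp Set.univ).toReal - (νn Set.univ).toReal := by
      conv_lhs => rw [← ν.toSignedMeasure_toJordanDecomposition]
      exact Measure.toSignedMeasure_sub_apply MeasurableSet.univ
    have hzero : (νp Set.univ).toReal - (νn Set.univ).toReal = 0 := by
      rw [← happ]; exact hν0
    unfold sintegral
    rw [hWV, hκint νp hp1, hκint νn hn1, ← mul_sub, hzero, mul_zero]
end

section
/- Let Ω be a compact metric space with distance ρ and let F : [0,∞) → [0,∞) be continuous. If μ₁, μ₂ ∈ 𝒫(Ω) are both local minimizers of I_F in the weak-* topology and I_F(μ₁) ≠ I_F(μ₂), then supp μ₁ is not contained in supp μ₂. -/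
open MeasureTheory Topology Filter
open scoped ENNReal NNReal

section AuxStmt5

set_option linter.unusedSectionVars false

variable {Ω : Type*} [MetricSpace Ω] [CompactSpace Ω] [MeasurableSpace Ω] [BorelSpace Ω]

/-- The interaction bilinear form. -/
noncomputable def Bform (G : Ω → Ω → ℝ) (μ ν : Measure Ω) : ℝ :=
  ∫ x, ∫ y, G x y ∂ν ∂μ

variable {G : Ω → Ω → ℝ}

lemma aux_hcs {α : Type*} [TopologicalSpace α] [CompactSpace α] (f : α → ℝ) :
    HasCompactSupport f :=
  (isClosed_tsupport f).isCompact

lemma aux_int (hG : Continuous fun p : Ω × Ω => G p.1 p.2)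
    (κ : Measure Ω) [IsFiniteMeasure κ] (x : Ω) :
    Integrable (fun y => G x y) κ :=
  (hG.comp (Continuous.prodMk_right x)).integrable_of_hasCompactSupport (aux_hcs _)

lemma aux_pot_cont (hG : Continuous fun p : Ω × Ω => G p.1 p.2)
    (κ : Measure Ω) [IsFiniteMeasure κ] :
    Continuous fun x => ∫ y, G x y ∂κ := by
  obtain ⟨M, hM⟩ := isCompact_univ.exists_bound_of_continuousOn hG.continuousOn
  apply continuous_of_dominated
  · exact fun x => (hG.comp (Continuous.prodMk_right x)).aestronglyMeasurable
  · intro x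
    exact ae_of_all _ fun y => hM (x, y) (Set.mem_univ _)
  · exact integrable_const M
  · exact ae_of_all _ fun y => hG.comp (Continuous.prodMk_left y)

lemma aux_pot_int (hG : Continuous fun p : Ω × Ω => G p.1 p.2)
    (κ ρ : Measure Ω) [IsFiniteMeasure κ] [IsFiniteMeasure ρ] :
    Integrable (fun x => ∫ y, G x y ∂κ) ρ :=
  (aux_pot_cont hG κ).integrable_of_hasCompactSupport (aux_hcs _)

lemma Bform_add_left (hG : Continuous fun p : Ω × Ω => G p.1 p.2)
    (μ ν ρ : Measure Ω) [IsFiniteMeasure μ] [IsFiniteMeasure ν] [IsFiniteMeasure ρ] :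
    Bform G (μ + ν) ρ = Bform G μ ρ + Bform G ν ρ :=
  integral_add_measure (aux_pot_int hG ρ μ) (aux_pot_int hG ρ ν)

lemma Bform_add_right (hG : Continuous fun p : Ω × Ω => G p.1 p.2)
    (μ ν ρ : Measure Ω) [IsFiniteMeasure μ] [IsFiniteMeasure ν] [IsFiniteMeasure ρ] :
    Bform G ρ (μ + ν) = Bform G ρ μ + Bform G ρ ν := by
  unfold Bform
  have h : ∀ x, ∫ y, G x y ∂(μ + ν) = ∫ y, G x y ∂μ + ∫ y, G x y ∂ν := fun x =>
    integral_add_measure (aux_int hG μ x) (aux_int hG ν x)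
  simp_rw [h]
  exact integral_add (aux_pot_int hG μ ρ) (aux_pot_int hG ν ρ)

lemma Bform_smul_left (c : ℝ≥0∞) (μ ρ : Measure Ω) :
    Bform G (c • μ) ρ = c.toReal * Bform G μ ρ := by
  unfold Bform; rw [integral_smul_measure]; rfl

lemma Bform_smul_right (c : ℝ≥0∞) (μ ρ : Measure Ω) :
    Bform G ρ (c • μ) = c.toReal * Bform G ρ μ := by
  unfold Bform
  simp_rw [integral_smul_measure]
  rw [integral_smul]
  rfl

lemma Bform_symm (hG : Continuous fun p : Ω × Ω => G p.1 p.2)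
    (hsym : ∀ x y, G x y = G y x)
    (μ ν : Measure Ω) [IsFiniteMeasure μ] [IsFiniteMeasure ν] :
    Bform G μ ν = Bform G ν μ := by
  have hint : Integrable (Function.uncurry G) (μ.prod ν) :=
    hG.integrable_of_hasCompactSupport (aux_hcs _)
  unfold Bform
  rw [integral_integral_swap hint]
  refine integral_congr_ae (ae_of_all _ fun y => ?_)
  exact integral_congr_ae (ae_of_all _ fun x => hsym x y)

lemma isFiniteMeasure_ofReal_smul (a : ℝ) (κ : Measure Ω) [IsFiniteMeasure κ] :
    IsFiniteMeasure (ENNReal.ofReal a • κ) := by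
  constructor
  rw [Measure.smul_apply, smul_eq_mul]
  exact ENNReal.mul_lt_top ENNReal.ofReal_lt_top (measure_lt_top κ _)

lemma Bform_sq (hG : Continuous fun p : Ω × Ω => G p.1 p.2)
    {a b : ℝ} (ha : 0 ≤ a) (hb : 0 ≤ b)
    (κ lam : Measure Ω) [IsFiniteMeasure κ] [IsFiniteMeasure lam] :
    Bform G (ENNReal.ofReal a • κ + ENNReal.ofReal b • lam)
      (ENNReal.ofReal a • κ + ENNReal.ofReal b • lam) =
    a ^ 2 * Bform G κ κ + a * b * (Bform G κ lam + Bform G lam κ)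
      + b ^ 2 * Bform G lam lam := by
  haveI := isFiniteMeasure_ofReal_smul a κ
  haveI := isFiniteMeasure_ofReal_smul b lam
  simp only [Bform_add_left hG, Bform_add_right hG, Bform_smul_left, Bform_smul_right,
    ENNReal.toReal_ofReal ha, ENNReal.toReal_ofReal hb]
  ring

/-- First-variation principle at a local minimizer. -/
lemma first_var {X : Type*} [TopologicalSpace X] {e : X → ℝ} {μ : X}
    (hmin : ∃ U ∈ 𝓝 μ, ∀ μ' ∈ U, e μ ≤ e μ')
    {ν : ℝ → X} (hν : Tendsto ν (𝓝[>] (0 : ℝ)) (𝓝 μ))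
    {b c : ℝ} (hE : ∀ᶠ t in 𝓝[>] (0 : ℝ), e (ν t) = e μ + b * t + c * t ^ 2) :
    0 ≤ b ∧ (b = 0 → 0 ≤ c) := by
  obtain ⟨U, hU, hUm⟩ := hmin
  have hmem : ∀ᶠ t in 𝓝[>] (0 : ℝ), ν t ∈ U := hν hU
  have hpos : ∀ᶠ t in 𝓝[>] (0 : ℝ), 0 < t := eventually_mem_nhdsWithin
  have key : ∀ᶠ t in 𝓝[>] (0 : ℝ), 0 ≤ b + c * t := by
    filter_upwards [hmem, hpos, hE] with t h1 h2 h3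
    have h4 := hUm _ h1
    rw [h3] at h4
    nlinarith
  constructor
  · have htd : Tendsto (fun t : ℝ => b + c * t) (𝓝[>] (0 : ℝ)) (𝓝 b) := by
      have h0 : Tendsto (fun t : ℝ => b + c * t) (𝓝 0) (𝓝 (b + c * 0)) :=
        ((continuous_const.add (continuous_const.mul continuous_id)).tendsto 0)
      simpa using h0.mono_left nhdsWithin_le_nhds
    exact ge_of_tendsto htd key
  · intro hb
    obtain ⟨t, h1, h2⟩ := (key.and hpos).exists
    rw [hb] at h1
    nlinarith

/-- Mixture of two probability measures is a probability measure. -/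
lemma mix_prob (κ₁ κ₂ : Measure Ω) [IsProbabilityMeasure κ₁] [IsProbabilityMeasure κ₂]
    {t : ℝ} (h0 : 0 ≤ t) (h1 : t ≤ 1) :
    IsProbabilityMeasure (ENNReal.ofReal (1 - t) • κ₂ + ENNReal.ofReal t • κ₁) := by
  constructor
  simp only [Measure.add_apply, Measure.smul_apply, smul_eq_mul, measure_univ, mul_one]
  rw [← ENNReal.ofReal_add (by linarith) h0]
  norm_num

noncomputable def pmix (κ₁ κ₂ : ProbabilityMeasure Ω) (t : ℝ) : ProbabilityMeasure Ω :=
  if h : 0 ≤ t ∧ t ≤ 1 then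
    ⟨ENNReal.ofReal (1 - t) • (κ₂ : Measure Ω) + ENNReal.ofReal t • (κ₁ : Measure Ω),
      mix_prob _ _ h.1 h.2⟩
  else κ₂

lemma pmix_coe (κ₁ κ₂ : ProbabilityMeasure Ω) {t : ℝ} (h0 : 0 ≤ t) (h1 : t ≤ 1) :
    (pmix κ₁ κ₂ t : Measure Ω) =
      ENNReal.ofReal (1 - t) • (κ₂ : Measure Ω) + ENNReal.ofReal t • (κ₁ : Measure Ω) := by
  simp [pmix, h0, h1]

lemma pmix_tendsto (κ₁ κ₂ : ProbabilityMeasure Ω) :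
    Tendsto (pmix κ₁ κ₂) (𝓝[>] (0 : ℝ)) (𝓝 κ₂) := by
  rw [ProbabilityMeasure.tendsto_iff_forall_integral_tendsto]
  intro f
  have hIoo : Set.Ioo (0 : ℝ) 1 ∈ 𝓝[>] (0 : ℝ) :=
    Ioo_mem_nhdsGT_of_mem ⟨le_refl _, one_pos⟩
  have hev : (fun t => ∫ x, f x ∂(pmix κ₁ κ₂ t : Measure Ω)) =ᶠ[𝓝[>] (0 : ℝ)]
      (fun t => (1 - t) * ∫ x, f x ∂(κ₂ : Measure Ω) + t * ∫ x, f x ∂(κ₁ : Measure Ω)) := by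
    filter_upwards [hIoo] with t ht
    haveI := isFiniteMeasure_ofReal_smul (1 - t) (κ₂ : Measure Ω)
    haveI := isFiniteMeasure_ofReal_smul t (κ₁ : Measure Ω)
    rw [pmix_coe κ₁ κ₂ ht.1.le ht.2.le,
      integral_add_measure (f.integrable _) (f.integrable _),
      integral_smul_measure, integral_smul_measure,
      ENNReal.toReal_ofReal (by linarith [ht.2] : (0:ℝ) ≤ 1 - t),
      ENNReal.toReal_ofReal ht.1.le, smul_eq_mul, smul_eq_mul]
  have htd : Tendsto (fun t : ℝ => (1 - t) * ∫ x, f x ∂(κ₂ : Measure Ω)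
      + t * ∫ x, f x ∂(κ₁ : Measure Ω)) (𝓝[>] (0 : ℝ)) (𝓝 (∫ x, f x ∂(κ₂ : Measure Ω))) := by
    have hc : Continuous (fun t : ℝ => (1 - t) * ∫ x, f x ∂(κ₂ : Measure Ω)
        + t * ∫ x, f x ∂(κ₁ : Measure Ω)) := by continuity
    have := (hc.tendsto 0).mono_left (nhdsWithin_le_nhds (s := Set.Ioi (0:ℝ)))
    simpa using this
  exact htd.congr' hev.symm

lemma msupp_compl_null_s5 (κ : Measure Ω) : κ (msupp κ)ᶜ = 0 := by
  apply measure_null_of_locally_null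
  intro x hx
  simp only [msupp, Set.mem_compl_iff, Set.mem_setOf_eq] at hx
  push_neg at hx
  obtain ⟨U, hUo, hxU, hU0⟩ := hx
  exact ⟨U, mem_nhdsWithin_of_mem_nhds (hUo.mem_nhds hxU), hU0⟩


/-- At a local minimizer, the potential is at most the energy on the support. -/
lemma potential_le (hG : Continuous fun p : Ω × Ω => G p.1 p.2)
    (hsym : ∀ x y, G x y = G y x) (μ : ProbabilityMeasure Ω)
    (hmin : ∃ U ∈ 𝓝 μ, ∀ μ' ∈ U,
      Bform G (μ : Measure Ω) (μ : Measure Ω) ≤ Bform G (μ' : Measure Ω) (μ' : Measure Ω))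
    {x₀ : Ω} (hx₀ : x₀ ∈ msupp (μ : Measure Ω)) :
    (∫ y, G x₀ y ∂(μ : Measure Ω)) ≤ Bform G (μ : Measure Ω) (μ : Measure Ω) := by
  set U : Ω → ℝ := fun x => ∫ y, G x y ∂(μ : Measure Ω) with hU
  refine le_of_forall_pos_le_add fun ε hε => ?_
  have hUc : Continuous U := aux_pot_cont hG _
  obtain ⟨δ, hδ, hball⟩ : ∃ δ > 0, ∀ x, dist x x₀ < δ → dist (U x) (U x₀) < ε :=
    Metric.continuousAt_iff.mp hUc.continuousAt ε hε
  set S : Set Ω := Metric.ball x₀ δ with hSdef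
  have hSm : MeasurableSet S := measurableSet_ball
  have hμS : (μ : Measure Ω) S ≠ 0 := hx₀ S Metric.isOpen_ball (Metric.mem_ball_self hδ)
  set m : ℝ≥0∞ := (μ : Measure Ω) S with hm
  have hmtop : m ≠ ∞ := measure_ne_top _ _
  set m' : ℝ := m.toReal with hm'def
  have hm' : 0 < m' := ENNReal.toReal_pos hμS hmtop
  obtain ⟨σm, hσdef⟩ : ∃ σ : Measure Ω, σ = m⁻¹ • (μ : Measure Ω).restrict S := ⟨_, rfl⟩
  haveI hσp : IsProbabilityMeasure σm := by
    constructor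
    rw [hσdef, Measure.smul_apply, Measure.restrict_apply_univ, smul_eq_mul]
    exact ENNReal.inv_mul_cancel hμS hmtop
  have hmofReal : m = ENNReal.ofReal m' := (ENNReal.ofReal_toReal hmtop).symm
  have hminv : m⁻¹ = ENNReal.ofReal m'⁻¹ := by
    rw [hmofReal, ← ENNReal.ofReal_inv_of_pos hm']
  obtain ⟨νm, hνm⟩ : ∃ f : ℝ → Measure Ω, f = fun t =>
      ENNReal.ofReal (1 + t) • (μ : Measure Ω).restrict Sᶜ
        + ENNReal.ofReal (1 + t - t / m') • (μ : Measure Ω).restrict S := ⟨_, rfl⟩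
  have hid : ∀ t : ℝ, 0 ≤ t → t ≤ m' →
      νm t + ENNReal.ofReal t • σm = ENNReal.ofReal (1 + t) • (μ : Measure Ω) := by
    intro t ht0 htm
    have hdiv : t / m' ≤ 1 := (div_le_one hm').mpr htm
    have hc0 : 0 ≤ 1 + t - t / m' := by linarith
    have hsc : ENNReal.ofReal (1 + t - t / m') + ENNReal.ofReal t * m⁻¹
        = ENNReal.ofReal (1 + t) := by
      rw [hminv, ← ENNReal.ofReal_mul ht0, ← ENNReal.ofReal_add hc0 (by positivity)]
      congr 1
      field_simp
      ring
    simp only [hνm, hσdef]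
    calc ENNReal.ofReal (1 + t) • (μ : Measure Ω).restrict Sᶜ
          + ENNReal.ofReal (1 + t - t / m') • (μ : Measure Ω).restrict S
          + ENNReal.ofReal t • (m⁻¹ • (μ : Measure Ω).restrict S)
        = ENNReal.ofReal (1 + t) • (μ : Measure Ω).restrict Sᶜ
          + (ENNReal.ofReal (1 + t - t / m') + ENNReal.ofReal t * m⁻¹)
            • (μ : Measure Ω).restrict S := by
          rw [smul_smul, add_smul, add_assoc]
      _ = ENNReal.ofReal (1 + t) • (μ : Measure Ω).restrict Sᶜ
          + ENNReal.ofReal (1 + t) • (μ : Measure Ω).restrict S := by rw [hsc]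
      _ = ENNReal.ofReal (1 + t) • ((μ : Measure Ω).restrict Sᶜ
            + (μ : Measure Ω).restrict S) := (smul_add _ _ _).symm
      _ = ENNReal.ofReal (1 + t) • (μ : Measure Ω) := by
          rw [Measure.restrict_compl_add_restrict hSm]
  have hprob : ∀ t : ℝ, 0 ≤ t → t ≤ m' → IsProbabilityMeasure (νm t) := by
    intro t ht0 htm
    constructor
    have h := congrArg (fun ρ : Measure Ω => ρ Set.univ) (hid t ht0 htm)
    simp only [Measure.add_apply, Measure.smul_apply, smul_eq_mul, measure_univ,
      mul_one] at h
    have h2 : (1 : ℝ≥0∞) + ENNReal.ofReal t = ENNReal.ofReal (1 + t) := by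
      rw [← ENNReal.ofReal_one, ← ENNReal.ofReal_add zero_le_one ht0]
    exact WithTop.add_right_cancel ENNReal.ofReal_ne_top (h.trans h2.symm)
  obtain ⟨ν, hνdef⟩ : ∃ g : ℝ → ProbabilityMeasure Ω, g = fun t =>
      if h : 0 ≤ t ∧ t ≤ m' then ⟨νm t, hprob t h.1 h.2⟩ else μ := ⟨_, rfl⟩
  have hνcoe : ∀ t : ℝ, 0 ≤ t → t ≤ m' → (ν t : Measure Ω) = νm t := by
    intro t h1 h2
    simp [hνdef, h1, h2]
  have hIoo : Set.Ioo (0 : ℝ) m' ∈ 𝓝[>] (0 : ℝ) :=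
    Ioo_mem_nhdsGT_of_mem ⟨le_refl _, hm'⟩
  have hνtendsto : Tendsto ν (𝓝[>] (0 : ℝ)) (𝓝 μ) := by
    rw [ProbabilityMeasure.tendsto_iff_forall_integral_tendsto]
    intro f
    have hev : (fun t => ∫ x, f x ∂(ν t : Measure Ω)) =ᶠ[𝓝[>] (0 : ℝ)]
        (fun t => (1 + t) * ∫ x in Sᶜ, f x ∂(μ : Measure Ω)
          + (1 + t - t / m') * ∫ x in S, f x ∂(μ : Measure Ω)) := by
      filter_upwards [hIoo] with t ht
      obtain ⟨ht0, htm⟩ := ht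
      have hdiv : t / m' ≤ 1 := (div_le_one hm').mpr htm.le
      haveI := isFiniteMeasure_ofReal_smul (1 + t) ((μ : Measure Ω).restrict Sᶜ)
      haveI := isFiniteMeasure_ofReal_smul (1 + t - t / m') ((μ : Measure Ω).restrict S)
      rw [hνcoe t ht0.le htm.le]
      simp only [hνm]
      rw [integral_add_measure (f.integrable _) (f.integrable _),
        integral_smul_measure, integral_smul_measure,
        ENNReal.toReal_ofReal (by linarith : (0:ℝ) ≤ 1 + t),
        ENNReal.toReal_ofReal (by linarith : (0:ℝ) ≤ 1 + t - t / m'),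
        smul_eq_mul, smul_eq_mul]
    have htd : Tendsto (fun t : ℝ => (1 + t) * ∫ x in Sᶜ, f x ∂(μ : Measure Ω)
        + (1 + t - t / m') * ∫ x in S, f x ∂(μ : Measure Ω)) (𝓝[>] (0 : ℝ))
        (𝓝 (∫ x, f x ∂(μ : Measure Ω))) := by
      have hc : Continuous (fun t : ℝ => (1 + t) * ∫ x in Sᶜ, f x ∂(μ : Measure Ω)
          + (1 + t - t / m') * ∫ x in S, f x ∂(μ : Measure Ω)) := by
        apply Continuous.add
        · exact (continuous_const.add continuous_id).mul continuous_const
        · exact ((continuous_const.add continuous_id).sub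
            (continuous_id.div_const m')).mul continuous_const
      have h0 : (1 + (0:ℝ)) * ∫ x in Sᶜ, f x ∂(μ : Measure Ω)
          + (1 + 0 - 0 / m') * ∫ x in S, f x ∂(μ : Measure Ω)
          = ∫ x, f x ∂(μ : Measure Ω) := by
        rw [zero_div]
        norm_num
        rw [add_comm]
        exact integral_add_compl hSm (f.integrable _)
      have h1 := (hc.tendsto 0).mono_left (nhdsWithin_le_nhds (s := Set.Ioi (0 : ℝ)))
      rw [h0] at h1
      exact h1
    exact htd.congr' hev.symm
  have hexp : ∀ᶠ t in 𝓝[>] (0 : ℝ),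
      Bform G (ν t : Measure Ω) (ν t : Measure Ω)
        = Bform G (μ : Measure Ω) (μ : Measure Ω)
          + (2 * Bform G (μ : Measure Ω) (μ : Measure Ω)
              - 2 * Bform G σm (μ : Measure Ω)) * t
          + (Bform G (μ : Measure Ω) (μ : Measure Ω)
              - 2 * Bform G σm (μ : Measure Ω) + Bform G σm σm) * t ^ 2 := by
    filter_upwards [hIoo] with t ht
    obtain ⟨ht0', htm'⟩ := ht
    have ht0 : 0 ≤ t := ht0'.le
    have htm : t ≤ m' := htm'.le
    have ht1 : (0:ℝ) ≤ 1 + t := by linarith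
    haveI := hprob t ht0 htm
    haveI := isFiniteMeasure_ofReal_smul t σm
    haveI := isFiniteMeasure_ofReal_smul (1 + t) (μ : Measure Ω)
    have hid' := hid t ht0 htm
    have h2' : Bform G σm (νm t) + t * Bform G σm σm
        = (1 + t) * Bform G σm (μ : Measure Ω) := by
      have h := congrArg (fun ρ => Bform G σm ρ) hid'
      simp only [Bform_add_right hG, Bform_smul_right,
        ENNReal.toReal_ofReal ht0, ENNReal.toReal_ofReal ht1] at h
      linarith [h]
    have h1' : Bform G (νm t) (νm t) + 2 * t * Bform G σm (νm t)
        + t ^ 2 * Bform G σm σm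
        = (1 + t) ^ 2 * Bform G (μ : Measure Ω) (μ : Measure Ω) := by
      have h : Bform G (νm t + ENNReal.ofReal t • σm) (νm t + ENNReal.ofReal t • σm)
          = Bform G (ENNReal.ofReal (1 + t) • (μ : Measure Ω))
              (ENNReal.ofReal (1 + t) • (μ : Measure Ω)) := by rw [hid']
      simp only [Bform_add_left hG, Bform_add_right hG, Bform_smul_left,
        Bform_smul_right, ENNReal.toReal_ofReal ht0, ENNReal.toReal_ofReal ht1] at h
      have hsymm1 : Bform G (νm t) σm = Bform G σm (νm t) :=
        Bform_symm hG hsym _ _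
      rw [hsymm1] at h
      linear_combination h
    rw [hνcoe t ht0 htm]
    linear_combination h1' - 2 * t * h2'
  obtain ⟨hb, -⟩ := first_var
    (e := fun ρ : ProbabilityMeasure Ω => Bform G (ρ : Measure Ω) (ρ : Measure Ω))
    hmin hνtendsto hexp
  have hWE : Bform G σm (μ : Measure Ω) ≤ Bform G (μ : Measure Ω) (μ : Measure Ω) := by
    linarith
  have hWform : Bform G σm (μ : Measure Ω) = m'⁻¹ * ∫ x in S, U x ∂(μ : Measure Ω) := by
    rw [hσdef]
    show ∫ x, U x ∂(m⁻¹ • (μ : Measure Ω).restrict S) = _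
    rw [integral_smul_measure, ENNReal.toReal_inv, smul_eq_mul]
  have hlow : (U x₀ - ε) * m' ≤ ∫ x in S, U x ∂(μ : Measure Ω) := by
    have hmono : ∫ _x in S, (U x₀ - ε) ∂(μ : Measure Ω)
        ≤ ∫ x in S, U x ∂(μ : Measure Ω) := by
      apply setIntegral_mono_on
      · exact (integrableOn_const_iff).mpr (Or.inr (measure_lt_top _ _))
      · exact (aux_pot_int hG (μ : Measure Ω) (μ : Measure Ω)).integrableOn
      · exact hSm
      · intro x hx
        have hd := hball x (by simpa [hSdef] using hx)
        rw [Real.dist_eq, abs_lt] at hd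
        linarith [hd.2]
    rw [setIntegral_const, smul_eq_mul] at hmono
    calc (U x₀ - ε) * m' = m' * (U x₀ - ε) := by ring
      _ ≤ _ := hmono
  have hfin : U x₀ - ε ≤ Bform G σm (μ : Measure Ω) := by
    rw [hWform]
    calc U x₀ - ε = m'⁻¹ * ((U x₀ - ε) * m') := by field_simp
      _ ≤ m'⁻¹ * ∫ x in S, U x ∂(μ : Measure Ω) :=
        mul_le_mul_of_nonneg_left hlow (by positivity)
  linarith

end AuxStmt5

/-- supports of local minimizers with distinct energies.
If `μ₁, μ₂` are local minimizers of `I_F` in the weak-* topology and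
`I_F(μ₁) ≠ I_F(μ₂)`, then `supp μ₁ ⊄ supp μ₂`. -/
theorem stmt_5 {Ω : Type*} [MetricSpace Ω] [CompactSpace Ω]
    [MeasurableSpace Ω] [BorelSpace Ω]
    (F : ℝ → ℝ) (hF_cont : ContinuousOn F (Set.Ici 0))
    (hF_nonneg : ∀ t ∈ Set.Ici (0 : ℝ), 0 ≤ F t)
    (μ₁ μ₂ : ProbabilityMeasure Ω)
    (hmin₁ : ∃ U ∈ 𝓝 μ₁, ∀ μ ∈ U,
      energy F dist (μ₁ : Measure Ω) ≤ energy F dist (μ : Measure Ω))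
    (hmin₂ : ∃ U ∈ 𝓝 μ₂, ∀ μ ∈ U,
      energy F dist (μ₂ : Measure Ω) ≤ energy F dist (μ : Measure Ω))
    (hne : energy F dist (μ₁ : Measure Ω) ≠ energy F dist (μ₂ : Measure Ω)) :
    ¬ msupp (μ₁ : Measure Ω) ⊆ msupp (μ₂ : Measure Ω) := by
  intro hsub
  have hG : Continuous fun p : Ω × Ω => F (dist p.1 p.2) :=
    hF_cont.comp_continuous continuous_dist fun p => dist_nonneg
  have hsym : ∀ x y : Ω, F (dist x y) = F (dist y x) := fun x y => by rw [dist_comm]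
  have hen : ∀ ρ : Measure Ω, energy F dist ρ = Bform (fun x y => F (dist x y)) ρ ρ :=
    fun _ => rfl
  have hmin₂' : ∃ U ∈ 𝓝 μ₂, ∀ μ' ∈ U,
      Bform (fun x y => F (dist x y)) (μ₂ : Measure Ω) (μ₂ : Measure Ω)
        ≤ Bform (fun x y => F (dist x y)) (μ' : Measure Ω) (μ' : Measure Ω) := hmin₂
  have hae : ∀ᵐ x ∂(μ₁ : Measure Ω), x ∈ msupp (μ₁ : Measure Ω) := by
    rw [ae_iff]
    exact msupp_compl_null_s5 _
  have hB12 : Bform (fun x y => F (dist x y)) (μ₁ : Measure Ω) (μ₂ : Measure Ω)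
      ≤ Bform (fun x y => F (dist x y)) (μ₂ : Measure Ω) (μ₂ : Measure Ω) := by
    have h1 : ∀ᵐ x ∂(μ₁ : Measure Ω),
        (fun x => ∫ y, F (dist x y) ∂(μ₂ : Measure Ω)) x
          ≤ (fun _ : Ω => Bform (fun x y => F (dist x y)) (μ₂ : Measure Ω)
              (μ₂ : Measure Ω)) x := by
      filter_upwards [hae] with x hx
      exact potential_le hG hsym μ₂ hmin₂' (hsub hx)
    have h2 := integral_mono_ae (aux_pot_int hG (μ₂ : Measure Ω) (μ₁ : Measure Ω))
      (integrable_const _) h1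
    calc Bform (fun x y => F (dist x y)) (μ₁ : Measure Ω) (μ₂ : Measure Ω)
        ≤ ∫ _x, Bform (fun x y => F (dist x y)) (μ₂ : Measure Ω) (μ₂ : Measure Ω)
            ∂(μ₁ : Measure Ω) := h2
      _ = Bform (fun x y => F (dist x y)) (μ₂ : Measure Ω) (μ₂ : Measure Ω) := by
          simp
  have hsymB : Bform (fun x y => F (dist x y)) (μ₂ : Measure Ω) (μ₁ : Measure Ω)
      = Bform (fun x y => F (dist x y)) (μ₁ : Measure Ω) (μ₂ : Measure Ω) :=
    Bform_symm hG hsym _ _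
  have hIoo : Set.Ioo (0 : ℝ) 1 ∈ 𝓝[>] (0 : ℝ) :=
    Ioo_mem_nhdsGT_of_mem ⟨le_refl _, one_pos⟩
  -- first variation at μ₂ along the segment towards μ₁
  have hexp2 : ∀ᶠ t in 𝓝[>] (0 : ℝ),
      energy F dist ((pmix μ₁ μ₂ t : ProbabilityMeasure Ω) : Measure Ω)
        = energy F dist (μ₂ : Measure Ω)
          + (Bform (fun x y => F (dist x y)) (μ₂ : Measure Ω) (μ₁ : Measure Ω)
              + Bform (fun x y => F (dist x y)) (μ₁ : Measure Ω) (μ₂ : Measure Ω)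
              - 2 * energy F dist (μ₂ : Measure Ω)) * t
          + (energy F dist (μ₁ : Measure Ω) + energy F dist (μ₂ : Measure Ω)
              - (Bform (fun x y => F (dist x y)) (μ₂ : Measure Ω) (μ₁ : Measure Ω)
                + Bform (fun x y => F (dist x y)) (μ₁ : Measure Ω) (μ₂ : Measure Ω)))
            * t ^ 2 := by
    filter_upwards [hIoo] with t ht
    obtain ⟨ht0, ht1⟩ := ht
    rw [pmix_coe μ₁ μ₂ ht0.le ht1.le]
    simp only [hen]
    rw [Bform_sq hG (by linarith : (0:ℝ) ≤ 1 - t) ht0.le]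
    ring
  obtain ⟨hb2, hc2⟩ := first_var
    (e := fun ρ : ProbabilityMeasure Ω => energy F dist (ρ : Measure Ω))
    hmin₂ (pmix_tendsto μ₁ μ₂) hexp2
  -- first variation at μ₁ along the segment towards μ₂
  have hexp1 : ∀ᶠ t in 𝓝[>] (0 : ℝ),
      energy F dist ((pmix μ₂ μ₁ t : ProbabilityMeasure Ω) : Measure Ω)
        = energy F dist (μ₁ : Measure Ω)
          + (Bform (fun x y => F (dist x y)) (μ₁ : Measure Ω) (μ₂ : Measure Ω)
              + Bform (fun x y => F (dist x y)) (μ₂ : Measure Ω) (μ₁ : Measure Ω)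
              - 2 * energy F dist (μ₁ : Measure Ω)) * t
          + (energy F dist (μ₂ : Measure Ω) + energy F dist (μ₁ : Measure Ω)
              - (Bform (fun x y => F (dist x y)) (μ₁ : Measure Ω) (μ₂ : Measure Ω)
                + Bform (fun x y => F (dist x y)) (μ₂ : Measure Ω) (μ₁ : Measure Ω)))
            * t ^ 2 := by
    filter_upwards [hIoo] with t ht
    obtain ⟨ht0, ht1⟩ := ht
    rw [pmix_coe μ₂ μ₁ ht0.le ht1.le]
    simp only [hen]
    rw [Bform_sq hG (by linarith : (0:ℝ) ≤ 1 - t) ht0.le]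
    ring
  obtain ⟨hb1, -⟩ := first_var
    (e := fun ρ : ProbabilityMeasure Ω => energy F dist (ρ : Measure Ω))
    hmin₁ (pmix_tendsto μ₂ μ₁) hexp1
  apply hne
  have e1 := hen (μ₁ : Measure Ω)
  have e2 := hen (μ₂ : Measure Ω)
  simp only [e1, e2] at hb2 hc2 hb1 ⊢
  have hzero : Bform (fun x y => F (dist x y)) (μ₂ : Measure Ω) (μ₁ : Measure Ω)
      + Bform (fun x y => F (dist x y)) (μ₁ : Measure Ω) (μ₂ : Measure Ω)
      - 2 * Bform (fun x y => F (dist x y)) (μ₂ : Measure Ω) (μ₂ : Measure Ω) = 0 := by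
    linarith [hb2, hB12, hsymB]
  have hc2' := hc2 hzero
  linarith [hb1, hc2', hsymB, hB12]
end

section
/- Let 𝕊^d be the unit sphere in ℝ^{d+1} with geodesic distance ρ(x,y) = arccos⟨x,y⟩. Then for every Borel probability measure μ on 𝕊^d one has ∬_{𝕊^d} ρ(x,y) dμ(x) dμ(y) ≤ π/2, and every centrally symmetric probability measure μ (i.e., μ invariant under the antipodal map x ↦ −x) attains equality; i.e., every centrally symmetric measure maximizes the geodesic distance energy ∬ ρ dμ dμ over 𝒫(𝕊^d). -/
open MeasureTheory Topology Filter Real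
open scoped ENNReal RealInnerProductSpace

noncomputable def cc (n : ℕ) : ℝ := (Nat.centralBinom n : ℝ) / 4 ^ n

lemma cc_nonneg (n : ℕ) : 0 ≤ cc n := by
  unfold cc; positivity

lemma cc_zero : cc 0 = 1 := by simp [cc, Nat.centralBinom]

lemma cc_rec (n : ℕ) : 2 * ((n : ℝ) + 1) * cc (n + 1) = (2 * n + 1) * cc n := by
  have h := Nat.succ_mul_centralBinom_succ n
  have h' : ((n + 1 : ℕ) : ℝ) * (Nat.centralBinom (n + 1) : ℝ)
      = 2 * (2 * (n : ℝ) + 1) * (Nat.centralBinom n : ℝ) := by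
    exact_mod_cast congrArg (Nat.cast : ℕ → ℝ) h
  unfold cc
  push_cast at h' ⊢
  rw [pow_succ]
  field_simp
  nlinarith [h', pow_pos (show (0:ℝ) < 4 by norm_num) n]

lemma cc_le_one (n : ℕ) : cc n ≤ 1 := by
  induction n with
  | zero => simp [cc_zero]
  | succ n ih =>
    have h := cc_rec n
    have h2 : (0:ℝ) < 2 * ((n:ℝ) + 1) := by positivity
    have : cc (n+1) = (2*n+1)/(2*((n:ℝ)+1)) * cc n := by field_simp; linarith [h]
    rw [this]
    have hle : (2*(n:ℝ)+1)/(2*((n:ℝ)+1)) ≤ 1 := by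
      rw [div_le_one h2]; linarith
    calc (2*(n:ℝ)+1)/(2*((n:ℝ)+1)) * cc n ≤ 1 * 1 :=
      mul_le_mul hle (by linarith) (cc_nonneg n) one_pos.le
    _ = 1 := by ring

lemma cc_summable {u : ℝ} (hu : |u| < 1) : Summable (fun n => cc n * u ^ n) := by
  apply Summable.of_norm_bounded (g := fun n => |u| ^ n) (summable_geometric_of_lt_one (abs_nonneg u) hu)
  intro n
  rw [norm_mul, norm_pow]
  calc ‖cc n‖ * |u| ^ n ≤ 1 * |u| ^ n := by
        apply mul_le_mul_of_nonneg_right _ (by positivity)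
        rw [Real.norm_eq_abs, abs_of_nonneg (cc_nonneg n)]; exact cc_le_one n
  _ = |u| ^ n := one_mul _

lemma summable_n_pow {v : ℝ} (hv : |v| < 1) : Summable (fun n : ℕ => (n:ℝ) * |v| ^ (n-1)) := by
  have h0 : (0:ℝ) ≤ |v| := abs_nonneg v
  rcases eq_or_lt_of_le h0 with h|h
  · apply summable_of_ne_finset_zero (s := {0, 1})
    intro n hn
    simp only [Finset.mem_insert, Finset.mem_singleton] at hn
    push_neg at hn
    have : 1 ≤ n - 1 := by omega
    rw [← h, zero_pow (by omega)]
    ring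
  · have hs : Summable (fun n : ℕ => (n:ℝ) * |v| ^ n) := by
      simpa using summable_pow_mul_geometric_of_norm_lt_one 1 (by rwa [norm_abs_eq_norm, norm_eq_abs])
    have := hs.mul_left (1/|v|)
    apply this.congr
    intro n
    cases n with
    | zero => simp
    | succ m =>
      simp only [Nat.add_sub_cancel]
      rw [pow_succ]
      field_simp

noncomputable def ff (u : ℝ) : ℝ := ∑' n, cc n * u ^ n

noncomputable def Td (u : ℝ) : ℝ := ∑' n, cc n * ((n:ℝ) * u ^ (n-1))

lemma summable_Td {u : ℝ} (hu : |u| < 1) : Summable (fun n => cc n * ((n:ℝ) * u ^ (n-1))) := by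
  apply Summable.of_norm_bounded (summable_n_pow hu)
  intro n
  rw [norm_mul, norm_mul]
  calc ‖cc n‖ * (‖(n:ℝ)‖ * ‖u ^ (n-1)‖) ≤ 1 * ((n:ℝ) * |u| ^ (n-1)) := by
        apply mul_le_mul
        · rw [Real.norm_eq_abs, abs_of_nonneg (cc_nonneg n)]; exact cc_le_one n
        · rw [Real.norm_natCast, Real.norm_eq_abs, abs_pow]
        · positivity
        · norm_num
  _ = (n:ℝ) * |u| ^ (n-1) := one_mul _

lemma hasDerivAt_ff {u : ℝ} (hu : |u| < 1) : HasDerivAt ff (Td u) u := by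
  set r : ℝ := (1 + |u|) / 2 with hr
  have h0 : 0 ≤ |u| := abs_nonneg u
  have hur : |u| < r := by rw [hr]; linarith
  have hr1 : r < 1 := by rw [hr]; linarith
  have hr0 : 0 < r := by rw [hr]; linarith
  have hrabs : |r| < 1 := by rwa [abs_of_pos hr0]
  have key := hasDerivAt_tsum_of_isPreconnected
    (g := fun (n : ℕ) (z : ℝ) => cc n * z ^ n)
    (g' := fun (n : ℕ) (z : ℝ) => cc n * ((n:ℝ) * z ^ (n-1)))
    (u := fun n : ℕ => (n:ℝ) * |r| ^ (n-1))
    (summable_n_pow hrabs) (isOpen_Ioo (a := -r) (b := r))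
    ((convex_Ioo _ _).isPreconnected)
    (fun n y _ => (hasDerivAt_pow n y).const_mul (cc n))
    ?_ (Set.mem_Ioo.mpr ⟨by linarith, hr0⟩) ?_ (Set.mem_Ioo.mpr ⟨by cases abs_lt.mp hur; linarith, (abs_lt.mp hur).2⟩)
  · exact key
  · intro n y hy
    rcases Set.mem_Ioo.mp hy with ⟨hy1, hy2⟩
    have hyr : |y| ≤ |r| := by rw [abs_of_pos hr0]; rw [abs_le]; constructor <;> linarith
    rw [norm_mul, norm_mul]
    calc ‖cc n‖ * (‖(n:ℝ)‖ * ‖y ^ (n-1)‖) ≤ 1 * ((n:ℝ) * |r| ^ (n-1)) := by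
          apply mul_le_mul
          · rw [Real.norm_eq_abs, abs_of_nonneg (cc_nonneg n)]; exact cc_le_one n
          · rw [Real.norm_natCast, Real.norm_eq_abs, abs_pow]
            apply mul_le_mul_of_nonneg_left _ (Nat.cast_nonneg n)
            exact pow_le_pow_left₀ (abs_nonneg y) hyr _
          · positivity
          · norm_num
    _ = (n:ℝ) * |r| ^ (n-1) := one_mul _
  · exact cc_summable (by simp : |(0:ℝ)| < 1)

lemma hasSum_shift {f : ℕ → ℝ} {a : ℝ} (h : HasSum f a) : HasSum (fun n => f (n+1)) (a - f 0) := by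
  simpa using (hasSum_nat_add_iff' (f := f) 1).mpr h

lemma ode_ff {u : ℝ} (hu : |u| < 1) : 2 * (1 - u) * Td u = ff u := by
  have hT : HasSum (fun n => cc n * ((n:ℝ) * u ^ (n-1))) (Td u) := (summable_Td hu).hasSum
  have hT1 : HasSum (fun n : ℕ => cc (n+1) * (((n:ℝ)+1) * u ^ n)) (Td u) := by
    have h := hasSum_shift hT
    simp only [Nat.cast_zero, zero_mul, mul_zero, sub_zero, Nat.add_sub_cancel] at h
    have heq : (fun n : ℕ => cc (n+1) * ((((n:ℕ)+1 : ℕ):ℝ) * u ^ n))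
        = (fun n : ℕ => cc (n+1) * (((n:ℝ)+1) * u ^ n)) := by
      funext n; push_cast; ring
    rwa [heq] at h
  have h2 : HasSum (fun n : ℕ => (2*(n:ℝ)+1) * cc n * u ^ n) (2 * Td u) := by
    have h := hT1.mul_left 2
    have heq : (fun n : ℕ => 2 * (cc (n+1) * (((n:ℝ)+1) * u ^ n)))
        = (fun n : ℕ => (2*(n:ℝ)+1) * cc n * u ^ n) := by
      funext n
      have hrec := cc_rec n
      linear_combination u^n * hrec
    rwa [heq] at h
  have h3 : HasSum (fun n : ℕ => (2*(n:ℝ)+1) * cc n * u ^ (n+1)) (2 * Td u * u) := by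
    have h := h2.mul_right u
    have heq : (fun n : ℕ => (2*(n:ℝ)+1) * cc n * u ^ n * u)
        = (fun n : ℕ => (2*(n:ℝ)+1) * cc n * u ^ (n+1)) := by
      funext n; rw [pow_succ]; ring
    rwa [heq] at h
  have h4 : HasSum (fun n : ℕ => (2*((n:ℝ)+1)+1) * cc (n+1) * u ^ (n+1)) (2 * Td u - 1) := by
    have h := hasSum_shift h2
    simp only [Nat.cast_zero, cc_zero, pow_zero] at h
    have heq : (fun n : ℕ => (2*(((n:ℕ)+1:ℕ):ℝ)+1) * cc (n+1) * u ^ (n+1))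
        = (fun n : ℕ => (2*((n:ℝ)+1)+1) * cc (n+1) * u ^ (n+1)) := by
      funext n; push_cast; ring
    rw [heq] at h
    convert h using 1
    ring
  have h5 : HasSum (fun n => cc (n+1) * u ^ (n+1)) (2 * Td u - 1 - 2 * Td u * u) := by
    have h := h4.sub h3
    have heq : (fun n : ℕ => (2*((n:ℝ)+1)+1) * cc (n+1) * u ^ (n+1) - (2*(n:ℝ)+1) * cc n * u ^ (n+1))
        = (fun n : ℕ => cc (n+1) * u ^ (n+1)) := by
      funext n
      have hrec := cc_rec n
      linear_combination u^(n+1) * hrec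
    rwa [heq] at h
  have h6 : HasSum (fun n => cc (n+1) * u ^ (n+1)) (ff u - 1) := by
    have h := hasSum_shift (cc_summable hu).hasSum
    simpa [cc_zero, ff] using h
  have := h5.unique h6
  unfold ff at *
  linarith

lemma ff_zero : ff 0 = 1 := by
  unfold ff
  rw [tsum_eq_single 0 (fun n hn => by simp [zero_pow hn])]
  simp [cc_zero]

lemma sqrt_mul_ff {u : ℝ} (h0 : 0 ≤ u) (h1 : u < 1) : Real.sqrt (1 - u) * ff u = 1 := by
  set G : ℝ → ℝ := fun z => Real.sqrt (1 - z) * ff z with hG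
  have key : ∀ v ∈ Set.Icc (0:ℝ) u, HasDerivAt G 0 v := by
    intro v hv
    have hv0 : 0 ≤ v := hv.1
    have hv1 : v < 1 := lt_of_le_of_lt hv.2 h1
    have hvabs : |v| < 1 := by rw [abs_of_nonneg hv0]; exact hv1
    have hs : Real.sqrt (1 - v) > 0 := Real.sqrt_pos.mpr (by linarith)
    have hsq : HasDerivAt (fun z : ℝ => Real.sqrt (1 - z)) (-(1 / (2 * Real.sqrt (1 - v)))) v := by
      have h1v : (1:ℝ) - v ≠ 0 := sub_ne_zero.mpr (ne_of_gt (by linarith))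
      have hinner : HasDerivAt (fun z : ℝ => 1 - z) (-1) v := by
        simpa using (hasDerivAt_id v).const_sub 1
      have := (Real.hasDerivAt_sqrt h1v).comp v hinner
      simpa [Function.comp_def] using this
    have hprod := hsq.mul (hasDerivAt_ff hvabs)
    have hsq2 : Real.sqrt (1 - v) ^ 2 = 1 - v := Real.sq_sqrt (by linarith)
    have hode := ode_ff hvabs
    have hzero : -(1 / (2 * Real.sqrt (1 - v))) * ff v + Real.sqrt (1 - v) * Td v = 0 := by
      have e1 : Real.sqrt (1-v) * Td v = ff v / (2 * Real.sqrt (1-v)) := by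
        rw [eq_div_iff (by positivity)]
        linear_combination 2 * Td v * hsq2 + hode
      rw [e1]
      ring
    rwa [hzero] at hprod
  have hcont : ContinuousOn G (Set.Icc 0 u) :=
    fun v hv => ((key v hv).continuousAt).continuousWithinAt
  have hderiv : ∀ v ∈ Set.Ico (0:ℝ) u, HasDerivWithinAt G 0 (Set.Ici v) v :=
    fun v hv => (key v ⟨hv.1, hv.2.le⟩).hasDerivWithinAt
  have := constant_of_has_deriv_right_zero hcont hderiv u (Set.right_mem_Icc.mpr h0)
  rw [hG] at this
  simp only at this
  rw [this]
  simp [ff_zero]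

lemma hasSum_ff {u : ℝ} (h0 : 0 ≤ u) (h1 : u < 1) :
    HasSum (fun n => cc n * u ^ n) (1 / Real.sqrt (1 - u)) := by
  have habs : |u| < 1 := by rw [abs_of_nonneg h0]; exact h1
  have hs : Real.sqrt (1 - u) > 0 := Real.sqrt_pos.mpr (by linarith)
  have h := (cc_summable habs).hasSum
  have : ff u = 1 / Real.sqrt (1 - u) := by
    rw [eq_div_iff (ne_of_gt hs), mul_comm]
    exact sqrt_mul_ff h0 h1
  unfold ff at this
  rwa [this] at h

noncomputable def aa (n : ℕ) : ℝ := cc n / (2*n+1)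

lemma aa_nonneg (n : ℕ) : 0 ≤ aa n := by
  exact div_nonneg (cc_nonneg n) (by positivity)

lemma aa_mul : ∀ n : ℕ, aa n * (2*(n:ℝ)+1) = cc n := by
  intro n
  unfold aa
  field_simp

lemma hasSum_deriv {t : ℝ} (h : |t| < 1) :
    HasSum (fun n => aa n * ((2*(n:ℝ)+1) * t^(2*n))) (1/Real.sqrt (1-t^2)) := by
  have ht2 : t^2 < 1 := by nlinarith [abs_lt.mp h]
  have h := hasSum_ff (sq_nonneg t) ht2
  have heq : (fun n => cc n * (t^2)^n) = (fun n => aa n * ((2*(n:ℝ)+1) * t^(2*n))) := by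
    funext n
    rw [← pow_mul, ← aa_mul n]
    ring
  rwa [heq] at h

lemma hasDerivAt_SS (N : ℕ) (t : ℝ) :
    HasDerivAt (fun t => ∑ n ∈ Finset.range N, aa n * t^(2*n+1))
      (∑ n ∈ Finset.range N, aa n * ((2*(n:ℝ)+1) * t^(2*n))) t := by
  apply HasDerivAt.fun_sum
  intro n _
  have h := (hasDerivAt_pow (2*n+1) t).const_mul (aa n)
  have : ((2*n+1 : ℕ) : ℝ) = 2*(n:ℝ)+1 := by push_cast; ring
  simpa [Nat.add_sub_cancel, this] using h

lemma mono_hN (N : ℕ) :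
    MonotoneOn (fun t => Real.arcsin t - ∑ n ∈ Finset.range N, aa n * t^(2*n+1))
      (Set.Icc (-1:ℝ) 1) := by
  have hderiv : ∀ t ∈ Set.Ioo (-1:ℝ) 1,
      HasDerivAt (fun t => Real.arcsin t - ∑ n ∈ Finset.range N, aa n * t^(2*n+1))
        (1/Real.sqrt (1-t^2) - ∑ n ∈ Finset.range N, aa n * ((2*(n:ℝ)+1) * t^(2*n))) t := by
    intro t ht
    exact (Real.hasDerivAt_arcsin (ne_of_gt ht.1) (ne_of_lt ht.2)).sub (hasDerivAt_SS N t)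
  apply monotoneOn_of_deriv_nonneg (convex_Icc _ _)
  · apply ContinuousOn.sub Real.continuous_arcsin.continuousOn
    exact (continuous_finset_sum _ fun n _ => continuous_const.mul (continuous_pow (2*n+1))).continuousOn
  · rw [interior_Icc]
    exact fun t ht => ((hderiv t ht).differentiableAt).differentiableWithinAt
  · rw [interior_Icc]
    intro t ht
    rw [(hderiv t ht).deriv]
    have habs : |t| < 1 := abs_lt.mpr ⟨ht.1, ht.2⟩
    have hsum := hasSum_deriv habs
    have hle : ∑ n ∈ Finset.range N, aa n * ((2*(n:ℝ)+1) * t^(2*n)) ≤ 1/Real.sqrt (1-t^2) := by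
      apply sum_le_hasSum _ _ hsum
      intro n _
      have : t^(2*n) = (t^2)^n := by rw [pow_mul]
      rw [this]
      exact mul_nonneg (aa_nonneg n) (mul_nonneg (by positivity) (pow_nonneg (sq_nonneg t) n))
    linarith

lemma SS_one_le (N : ℕ) : ∑ n ∈ Finset.range N, aa n ≤ π/2 := by
  have h := mono_hN N (Set.mem_Icc.mpr ⟨by norm_num, by norm_num⟩ : (0:ℝ) ∈ Set.Icc (-1:ℝ) 1)
    (Set.mem_Icc.mpr ⟨by norm_num, le_refl 1⟩) zero_le_one
  simp only [Real.arcsin_zero, Real.arcsin_one, one_pow, mul_one] at h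
  have hz : ∑ n ∈ Finset.range N, aa n * (0:ℝ)^(2*n+1) = 0 := by
    apply Finset.sum_eq_zero
    intro n _
    simp [zero_pow (Nat.succ_ne_zero _)]
  rw [hz] at h
  linarith

lemma summable_aa : Summable aa :=
  summable_of_sum_range_le (fun n => aa_nonneg n) (fun N => SS_one_le N)

noncomputable def FF (t : ℝ) : ℝ := ∑' n, aa n * t^(2*n+1)

lemma summable_FF {t : ℝ} (h : |t| ≤ 1) : Summable (fun n => aa n * t^(2*n+1)) := by
  apply Summable.of_norm_bounded summable_aa
  intro n
  rw [norm_mul, Real.norm_eq_abs, Real.norm_eq_abs, abs_of_nonneg (aa_nonneg n), abs_pow]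
  calc aa n * |t| ^ (2*n+1) ≤ aa n * 1 := by
        apply mul_le_mul_of_nonneg_left _ (aa_nonneg n)
        exact pow_le_one₀ (abs_nonneg t) h
  _ = aa n := mul_one _

lemma hasDerivAt_FF {t : ℝ} (ht : |t| < 1) : HasDerivAt FF (1/Real.sqrt (1-t^2)) t := by
  set r : ℝ := (1 + |t|) / 2 with hr
  have h0 : 0 ≤ |t| := abs_nonneg t
  have hur : |t| < r := by rw [hr]; linarith
  have hr1 : r < 1 := by rw [hr]; linarith
  have hr0 : 0 < r := by rw [hr]; linarith
  have key := hasDerivAt_tsum_of_isPreconnected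
    (g := fun (n : ℕ) (z : ℝ) => aa n * z ^ (2*n+1))
    (g' := fun (n : ℕ) (z : ℝ) => aa n * ((2*(n:ℝ)+1) * z ^ (2*n)))
    (u := fun n : ℕ => (2*(n:ℝ)+1) * r ^ (2*n))
    ?_ (isOpen_Ioo (a := -r) (b := r))
    ((convex_Ioo _ _).isPreconnected)
    (fun n y _ => by
      have h := (hasDerivAt_pow (2*n+1) y).const_mul (aa n)
      have hc : ((2*n+1 : ℕ) : ℝ) = 2*(n:ℝ)+1 := by push_cast; ring
      simpa [Nat.add_sub_cancel, hc] using h)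
    ?_ (Set.mem_Ioo.mpr ⟨by linarith, hr0⟩) ?_
    (Set.mem_Ioo.mpr ⟨by cases abs_lt.mp hur; linarith, (abs_lt.mp hur).2⟩)
  · have htsum : ∑' n, aa n * ((2*(n:ℝ)+1) * t ^ (2*n)) = 1/Real.sqrt (1-t^2) :=
      (hasSum_deriv ht).tsum_eq
    rw [← htsum]
    exact key
  · -- summable bound
    have hsq : r^2 < 1 := by nlinarith
    have : Summable (fun n : ℕ => (2*(n:ℝ)+1) * (r^2) ^ n) := by
      have h1 : Summable (fun n : ℕ => (n:ℝ) * (r^2) ^ n) := by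
        simpa using summable_pow_mul_geometric_of_norm_lt_one 1
          (by rw [Real.norm_eq_abs, abs_of_nonneg (by positivity)]; exact hsq)
      have h2 : Summable (fun n : ℕ => (r^2) ^ n) :=
        summable_geometric_of_lt_one (by positivity) hsq
      have := (h1.mul_left 2).add h2
      apply this.congr
      intro n
      ring
    apply this.congr
    intro n
    rw [← pow_mul]
  · intro n y hy
    rcases Set.mem_Ioo.mp hy with ⟨hy1, hy2⟩
    have hyr : |y| ≤ r := by rw [abs_le]; constructor <;> linarith
    rw [norm_mul, norm_mul]
    calc ‖aa n‖ * (‖(2*(n:ℝ)+1)‖ * ‖y ^ (2*n)‖) ≤ 1 * ((2*(n:ℝ)+1) * r ^ (2*n)) := by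
          apply mul_le_mul
          · rw [Real.norm_eq_abs, abs_of_nonneg (aa_nonneg n)]
            calc aa n ≤ cc n := by
                  unfold aa
                  apply div_le_self (cc_nonneg n)
                  push_cast
                  linarith [Nat.cast_nonneg (α := ℝ) n]
            _ ≤ 1 := cc_le_one n
          · rw [Real.norm_eq_abs, abs_of_nonneg (by positivity : (0:ℝ) ≤ 2*(n:ℝ)+1),
              Real.norm_eq_abs, abs_pow]
            apply mul_le_mul_of_nonneg_left _ (by positivity)
            exact pow_le_pow_left₀ (abs_nonneg y) hyr _
          · positivity
          · positivity
    _ = (2*(n:ℝ)+1) * r ^ (2*n) := one_mul _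
  · exact summable_FF (by rw [abs_zero]; norm_num)

lemma FF_eq_arcsin {t : ℝ} (h0 : 0 ≤ t) (h1 : t < 1) : FF t = Real.arcsin t := by
  set D : ℝ → ℝ := fun z => Real.arcsin z - FF z with hD
  have key : ∀ v ∈ Set.Icc (0:ℝ) t, HasDerivAt D 0 v := by
    intro v hv
    have hv1 : v < 1 := lt_of_le_of_lt hv.2 h1
    have hvabs : |v| < 1 := by rw [abs_of_nonneg hv.1]; exact hv1
    have h := (Real.hasDerivAt_arcsin (by intro hc; rw [hc] at hv; linarith [hv.1] : v ≠ -1) (ne_of_lt hv1)).sub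
      (hasDerivAt_FF hvabs)
    rw [hD]; rw [sub_self] at h; exact h
  have hcont : ContinuousOn D (Set.Icc 0 t) :=
    fun v hv => ((key v hv).continuousAt).continuousWithinAt
  have hderiv : ∀ v ∈ Set.Ico (0:ℝ) t, HasDerivWithinAt D 0 (Set.Ici v) v :=
    fun v hv => (key v ⟨hv.1, hv.2.le⟩).hasDerivWithinAt
  have hconst := constant_of_has_deriv_right_zero hcont hderiv t (Set.right_mem_Icc.mpr h0)
  have hD0 : D 0 = 0 := by
    rw [hD]
    simp only [Real.arcsin_zero]
    have : FF 0 = 0 := by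
      unfold FF
      convert tsum_zero with n
      simp [zero_pow (Nat.succ_ne_zero _)]
    rw [this]; ring
  rw [hD] at hconst hD0
  simp only at hconst hD0
  linarith [hconst, hD0]

lemma hasSum_aa : HasSum aa (π/2) := by
  have hL : Summable aa := summable_aa
  set L := ∑' n, aa n with hLdef
  have hle : L ≤ π/2 := tsum_le_of_sum_range_le (fun n => aa_nonneg n) SS_one_le
  have hge : π/2 ≤ L := by
    have hev : ∀ᶠ t in nhdsWithin (1:ℝ) (Set.Iio 1), Real.arcsin t ≤ L := by
      filter_upwards [Ioo_mem_nhdsLT_of_mem (Set.mem_Ioc.mpr ⟨(by norm_num : (0:ℝ) < 1), le_refl 1⟩)]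
      intro t ht
      rw [← FF_eq_arcsin ht.1.le ht.2]
      unfold FF
      apply Summable.tsum_le_tsum _ (summable_FF (by rw [abs_of_nonneg ht.1.le]; exact ht.2.le)) hL
      intro n
      calc aa n * t^(2*n+1) ≤ aa n * 1 := by
            apply mul_le_mul_of_nonneg_left _ (aa_nonneg n)
            exact pow_le_one₀ ht.1.le ht.2.le
      _ = aa n := mul_one _
    have htend : Filter.Tendsto Real.arcsin (nhdsWithin (1:ℝ) (Set.Iio 1)) (nhds (π/2)) := by
      have := (Real.continuous_arcsin.tendsto 1).mono_left
        (nhdsWithin_le_nhds (s := Set.Iio 1))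
      rwa [Real.arcsin_one] at this
    exact le_of_tendsto htend hev
  have : L = π/2 := le_antisymm hle hge
  rw [hLdef] at this
  rw [← this]
  exact hL.hasSum

lemma arcsin_lower (N : ℕ) {t : ℝ} (ht : t ∈ Set.Icc (-1:ℝ) 1) :
    (∑ n ∈ Finset.range N, aa n * t^(2*n+1)) - (π/2 - ∑ n ∈ Finset.range N, aa n)
      ≤ Real.arcsin t := by
  have h := mono_hN N (Set.mem_Icc.mpr ⟨le_refl (-1:ℝ), by norm_num⟩) ht ht.1
  have hm1 : ∑ n ∈ Finset.range N, aa n * (-1:ℝ)^(2*n+1) = -∑ n ∈ Finset.range N, aa n := by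
    rw [← Finset.sum_neg_distrib]
    apply Finset.sum_congr rfl
    intro n _
    rw [Odd.neg_one_pow ⟨n, by ring⟩]
    ring
  simp only at h
  rw [hm1, show Real.arcsin (-1) = -(π/2) from Real.arcsin_neg_one] at h
  linarith

open MeasureTheory

section Sphere

variable {d : ℕ}

local notation "E" => EuclideanSpace ℝ (Fin (d+1))
local notation "S" => Metric.sphere (0 : EuclideanSpace ℝ (Fin (d+1))) 1

open scoped RealInnerProductSpace

lemma integrable_cont (μ : Measure S) [IsFiniteMeasure μ] {g : S → ℝ} (hg : Continuous g) :
    Integrable g μ :=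
  hg.integrable_of_hasCompactSupport (HasCompactSupport.of_compactSpace g)

lemma inner_cont : Continuous (fun p : S × S => ⟪(p.1 : E), (p.2 : E)⟫) :=
  (continuous_subtype_val.comp continuous_fst).inner (continuous_subtype_val.comp continuous_snd)

lemma inner_mem_Icc (x y : S) : ⟪(x : E), (y : E)⟫ ∈ Set.Icc (-1:ℝ) 1 := by
  have := abs_real_inner_le_norm (x : E) (y : E)
  simp only [norm_eq_of_mem_sphere, mul_one] at this
  exact abs_le.mp this

lemma inner_coord_sum (x y : S) : ⟪(x : E), (y : E)⟫ = ∑ i, (x : E) i * (y : E) i := by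
  rw [PiLp.inner_apply]; simp [RCLike.inner_apply]; exact Finset.sum_congr rfl fun i _ => mul_comm _ _

lemma moment_nonneg (μ : Measure S) [IsProbabilityMeasure μ] (k : ℕ) :
    0 ≤ ∫ x, ∫ y, ⟪(x : E), (y : E)⟫ ^ k ∂μ ∂μ := by
  classical
  have contProd : ∀ p : Fin k → Fin (d+1), Continuous (fun y : S => ∏ j, (y : E) (p j)) :=
    fun p => continuous_finset_prod _ fun j _ =>
      (EuclideanSpace.proj (p j)).continuous.comp continuous_subtype_val
  set mom : (Fin k → Fin (d+1)) → ℝ := fun p => ∫ y, ∏ j, (y : E) (p j) ∂μ with hmom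
  have expand : ∀ x y : S, ⟪(x : E), (y : E)⟫ ^ k
      = ∑ p : Fin k → Fin (d+1), (∏ j, (x : E) (p j)) * (∏ j, (y : E) (p j)) := by
    intro x y
    rw [inner_coord_sum, Fintype.sum_pow]
    exact Finset.sum_congr rfl fun p _ => by rw [← Finset.prod_mul_distrib]
  have inner_int : ∀ x : S, ∫ y, ⟪(x : E), (y : E)⟫ ^ k ∂μ
      = ∑ p : Fin k → Fin (d+1), (∏ j, (x : E) (p j)) * mom p := by
    intro x
    simp_rw [expand x]
    rw [integral_finset_sum]
    · exact Finset.sum_congr rfl fun p _ => integral_const_mul _ _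
    · exact fun p _ => (integrable_cont μ (contProd p)).const_mul _
  calc (0:ℝ) ≤ ∑ p : Fin k → Fin (d+1), mom p * mom p :=
        Finset.sum_nonneg fun p _ => mul_self_nonneg _
  _ = ∫ x, ∫ y, ⟪(x : E), (y : E)⟫ ^ k ∂μ ∂μ := by
      rw [show (fun x : S => ∫ y, ⟪(x : E), (y : E)⟫ ^ k ∂μ)
          = fun x : S => ∑ p : Fin k → Fin (d+1), (∏ j, (x : E) (p j)) * mom p
        from funext inner_int]
      rw [integral_finset_sum]
      · exact (Finset.sum_congr rfl fun p _ => by rw [integral_mul_const]).symm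
      · exact fun p _ => (integrable_cont μ (contProd p)).mul_const _

end Sphere

open Topology Filter
open scoped RealInnerProductSpace

/-- maximizers of the geodesic distance energy, `δ = 1`.
For every Borel probability measure `μ` on `𝕊^d`,
`∬ ρ(x,y) dμ dμ ≤ π/2`, and every centrally symmetric probability measure
(invariant under the antipodal map) attains equality. -/
theorem stmt_15 (d : ℕ) :
    ∀ μ : Measure ↥(Metric.sphere (0 : EuclideanSpace ℝ (Fin (d + 1))) 1),
      IsProbabilityMeasure μ →
      (∫ x, ∫ y, Real.arccos ⟪(x : EuclideanSpace ℝ (Fin (d + 1))),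
          (y : EuclideanSpace ℝ (Fin (d + 1)))⟫ ∂μ ∂μ ≤ π / 2) ∧
      (μ.map (fun x => -x) = μ →
        ∫ x, ∫ y, Real.arccos ⟪(x : EuclideanSpace ℝ (Fin (d + 1))),
          (y : EuclideanSpace ℝ (Fin (d + 1)))⟫ ∂μ ∂μ = π / 2) := by
  intro μ hμ
  haveI := hμ
  -- continuity facts
  have hci : ∀ x : (Metric.sphere (0 : EuclideanSpace ℝ (Fin (d + 1))) 1), Continuous (fun y : (Metric.sphere (0 : EuclideanSpace ℝ (Fin (d + 1))) 1) => ⟪(x : EuclideanSpace ℝ (Fin (d + 1))), (y : EuclideanSpace ℝ (Fin (d + 1)))⟫) :=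
    fun x => continuous_const.inner continuous_subtype_val
  have hca : ∀ x : (Metric.sphere (0 : EuclideanSpace ℝ (Fin (d + 1))) 1), Continuous (fun y : (Metric.sphere (0 : EuclideanSpace ℝ (Fin (d + 1))) 1) => Real.arccos ⟪(x : EuclideanSpace ℝ (Fin (d + 1))), (y : EuclideanSpace ℝ (Fin (d + 1)))⟫) :=
    fun x => Real.continuous_arccos.comp (hci x)
  have hcs : ∀ x : (Metric.sphere (0 : EuclideanSpace ℝ (Fin (d + 1))) 1), Continuous (fun y : (Metric.sphere (0 : EuclideanSpace ℝ (Fin (d + 1))) 1) => Real.arcsin ⟪(x : EuclideanSpace ℝ (Fin (d + 1))), (y : EuclideanSpace ℝ (Fin (d + 1)))⟫) :=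
    fun x => Real.continuous_arcsin.comp (hci x)
  set g : (Metric.sphere (0 : EuclideanSpace ℝ (Fin (d + 1))) 1) → ℝ := fun x => ∫ y, Real.arccos ⟪(x : EuclideanSpace ℝ (Fin (d + 1))), (y : EuclideanSpace ℝ (Fin (d + 1)))⟫ ∂μ with hgdef
  set gs : (Metric.sphere (0 : EuclideanSpace ℝ (Fin (d + 1))) 1) → ℝ := fun x => ∫ y, Real.arcsin ⟪(x : EuclideanSpace ℝ (Fin (d + 1))), (y : EuclideanSpace ℝ (Fin (d + 1)))⟫ ∂μ with hgsdef
  have hmg : AEStronglyMeasurable g μ :=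
    ((Real.continuous_arccos.comp inner_cont).stronglyMeasurable.integral_prod_right'
      (ν := μ)).aestronglyMeasurable
  have hmgs : AEStronglyMeasurable gs μ :=
    ((Real.continuous_arcsin.comp inner_cont).stronglyMeasurable.integral_prod_right'
      (ν := μ)).aestronglyMeasurable
  have hbg : ∀ x, ‖g x‖ ≤ π := by
    intro x
    apply (norm_integral_le_of_norm_le_const (C := π) ?_).trans
    · simp
    · filter_upwards with y
      rw [Real.norm_eq_abs, abs_of_nonneg (Real.arccos_nonneg _)]
      exact Real.arccos_le_pi _
  have hbgs : ∀ x, ‖gs x‖ ≤ π/2 := by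
    intro x
    apply (norm_integral_le_of_norm_le_const (C := π/2) ?_).trans
    · simp
    · filter_upwards with y
      rw [Real.norm_eq_abs, abs_le]
      exact ⟨Real.neg_pi_div_two_le_arcsin _, Real.arcsin_le_pi_div_two _⟩
  have hig : Integrable g μ := by
    apply Integrable.mono' (integrable_const π) hmg
    filter_upwards with x using hbg x
  have higs : Integrable gs μ := by
    apply Integrable.mono' (integrable_const (π/2)) hmgs
    filter_upwards with x using hbgs x
  have hgpi : ∀ x : (Metric.sphere (0 : EuclideanSpace ℝ (Fin (d + 1))) 1), g x = π/2 - gs x := by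
    intro x
    rw [hgdef, hgsdef]
    simp only
    have : (fun y : (Metric.sphere (0 : EuclideanSpace ℝ (Fin (d + 1))) 1) => Real.arccos ⟪(x : EuclideanSpace ℝ (Fin (d + 1))), (y : EuclideanSpace ℝ (Fin (d + 1)))⟫)
        = fun y : (Metric.sphere (0 : EuclideanSpace ℝ (Fin (d + 1))) 1) => π/2 - Real.arcsin ⟪(x : EuclideanSpace ℝ (Fin (d + 1))), (y : EuclideanSpace ℝ (Fin (d + 1)))⟫ :=
      funext fun y => Real.arccos_eq_pi_div_two_sub_arcsin _
    rw [this, integral_sub (integrable_const _) (integrable_cont μ (hcs x)), integral_const]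
    simp
  have hIA : ∫ x, g x ∂μ = π/2 - ∫ x, gs x ∂μ := by
    rw [show g = fun x => π/2 - gs x from funext hgpi,
      integral_sub (integrable_const _) higs, integral_const]
    simp
  -- lower bound for A := ∫ gs
  have hA : 0 ≤ ∫ x, gs x ∂μ := by
    have htendsto : Tendsto (fun N => -(π/2 - ∑ n ∈ Finset.range N, aa n)) atTop (𝓝 0) := by
      have h := hasSum_aa.tendsto_sum_nat
      have := (h.const_sub (π/2)).neg
      simpa using this
    apply le_of_tendsto' htendsto
    intro N
    set eN := π/2 - ∑ n ∈ Finset.range N, aa n with heN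
    -- SS kernel
    have hcSS : ∀ x : (Metric.sphere (0 : EuclideanSpace ℝ (Fin (d + 1))) 1), Continuous
        (fun y : (Metric.sphere (0 : EuclideanSpace ℝ (Fin (d + 1))) 1) => ∑ n ∈ Finset.range N, aa n * ⟪(x : EuclideanSpace ℝ (Fin (d + 1))), (y : EuclideanSpace ℝ (Fin (d + 1)))⟫^(2*n+1)) :=
      fun x => continuous_finset_sum _ fun n _ => continuous_const.mul ((hci x).pow _)
    set q : (Metric.sphere (0 : EuclideanSpace ℝ (Fin (d + 1))) 1) → ℝ := fun x => ∫ y, ∑ n ∈ Finset.range N, aa n * ⟪(x : EuclideanSpace ℝ (Fin (d + 1))), (y : EuclideanSpace ℝ (Fin (d + 1)))⟫^(2*n+1) ∂μ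
      with hqdef
    have hmq : AEStronglyMeasurable q μ :=
      (((continuous_finset_sum (Finset.range N) fun n _ => continuous_const.mul
        (inner_cont.pow (2*n+1))).stronglyMeasurable.integral_prod_right'
          (ν := μ)).aestronglyMeasurable)
    have hbq : ∀ x, ‖q x‖ ≤ π/2 := by
      intro x
      apply (norm_integral_le_of_norm_le_const (C := π/2) ?_).trans
      · simp
      · filter_upwards with y
        rw [Real.norm_eq_abs]
        have h1 : |∑ n ∈ Finset.range N, aa n * ⟪(x : EuclideanSpace ℝ (Fin (d + 1))), (y : EuclideanSpace ℝ (Fin (d + 1)))⟫^(2*n+1)|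
            ≤ ∑ n ∈ Finset.range N, aa n := by
          apply (Finset.abs_sum_le_sum_abs _ _).trans
          apply Finset.sum_le_sum
          intro n _
          rw [abs_mul, abs_of_nonneg (aa_nonneg n), abs_pow]
          calc aa n * |⟪(x : EuclideanSpace ℝ (Fin (d + 1))), (y : EuclideanSpace ℝ (Fin (d + 1)))⟫| ^ (2*n+1) ≤ aa n * 1 := by
                apply mul_le_mul_of_nonneg_left _ (aa_nonneg n)
                apply pow_le_one₀ (abs_nonneg _)
                exact abs_le.mpr (inner_mem_Icc x y)
          _ = aa n := mul_one _
        exact h1.trans (SS_one_le N)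
    have hiq : Integrable q μ := by
      apply Integrable.mono' (integrable_const (π/2)) hmq
      filter_upwards with x using hbq x
    -- pointwise inner bound
    have hinner : ∀ x : (Metric.sphere (0 : EuclideanSpace ℝ (Fin (d + 1))) 1), q x - eN ≤ gs x := by
      intro x
      have hpt : ∀ y : (Metric.sphere (0 : EuclideanSpace ℝ (Fin (d + 1))) 1), (∑ n ∈ Finset.range N, aa n * ⟪(x : EuclideanSpace ℝ (Fin (d + 1))), (y : EuclideanSpace ℝ (Fin (d + 1)))⟫^(2*n+1)) - eN
          ≤ Real.arcsin ⟪(x : EuclideanSpace ℝ (Fin (d + 1))), (y : EuclideanSpace ℝ (Fin (d + 1)))⟫ :=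
        fun y => arcsin_lower N (inner_mem_Icc x y)
      have hmono := integral_mono
        (Integrable.sub (integrable_cont μ (hcSS x)) (integrable_const eN))
        (integrable_cont μ (hcs x)) hpt
      have hsub := integral_sub (integrable_cont μ (hcSS x)) (integrable_const (μ := μ) eN)
      rw [integral_const, probReal_univ, one_smul] at hsub
      simp only [Pi.sub_apply] at hmono
      rw [hsub] at hmono
      exact hmono
    have houter : ∫ x, q x ∂μ - eN ≤ ∫ x, gs x ∂μ := by
      have hmono := integral_mono (hiq.sub (integrable_const eN)) higs hinner
      have hsub := integral_sub hiq (integrable_const (μ := μ) eN)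
      rw [integral_const, probReal_univ, one_smul] at hsub
      simp only [Pi.sub_apply] at hmono
      rw [hsub] at hmono
      exact hmono
    -- q has nonneg integral
    have hqint : 0 ≤ ∫ x, q x ∂μ := by
      have hq_eq : ∀ x : (Metric.sphere (0 : EuclideanSpace ℝ (Fin (d + 1))) 1), q x = ∑ n ∈ Finset.range N,
          aa n * ∫ y, ⟪(x : EuclideanSpace ℝ (Fin (d + 1))), (y : EuclideanSpace ℝ (Fin (d + 1)))⟫^(2*n+1) ∂μ := by
        intro x
        rw [hqdef]
        simp only
        rw [integral_finset_sum]
        exact Finset.sum_congr rfl fun n _ => integral_const_mul _ _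
        exact fun n _ => (integrable_cont μ ((hci x).pow _)).const_mul _
      rw [show q = fun x : (Metric.sphere (0 : EuclideanSpace ℝ (Fin (d + 1))) 1) => ∑ n ∈ Finset.range N,
          aa n * ∫ y, ⟪(x : EuclideanSpace ℝ (Fin (d + 1))), (y : EuclideanSpace ℝ (Fin (d + 1)))⟫^(2*n+1) ∂μ from funext hq_eq]
      rw [integral_finset_sum]
      · apply Finset.sum_nonneg
        intro n _
        rw [integral_const_mul]
        exact mul_nonneg (aa_nonneg n) (moment_nonneg μ (2*n+1))
      · intro n _
        apply Integrable.const_mul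
        have hm : AEStronglyMeasurable (fun x : (Metric.sphere (0 : EuclideanSpace ℝ (Fin (d + 1))) 1) => ∫ y, ⟪(x : EuclideanSpace ℝ (Fin (d + 1))), (y : EuclideanSpace ℝ (Fin (d + 1)))⟫^(2*n+1) ∂μ) μ :=
          ((inner_cont.pow _).stronglyMeasurable.integral_prod_right'
            (ν := μ)).aestronglyMeasurable
        apply Integrable.mono' (integrable_const 1) hm
        filter_upwards with x
        apply (norm_integral_le_of_norm_le_const (C := 1) ?_).trans
        · simp
        · filter_upwards with y
          rw [Real.norm_eq_abs, abs_pow]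
          exact pow_le_one₀ (abs_nonneg _) (abs_le.mpr (inner_mem_Icc x y))
    linarith
  constructor
  · rw [hIA]; linarith
  · intro hsym
    have hnegc : Continuous (fun x : (Metric.sphere (0 : EuclideanSpace ℝ (Fin (d + 1))) 1) => (-x : (Metric.sphere (0 : EuclideanSpace ℝ (Fin (d + 1))) 1))) :=
      Continuous.subtype_mk (continuous_neg.comp continuous_subtype_val) _
    have hmap : ∫ x, g x ∂μ = ∫ x, g (-x) ∂μ := by
      conv_lhs => rw [← hsym]
      rw [integral_map hnegc.measurable.aemeasurable]
      rw [hsym]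
      exact hmg
    have hgneg : ∀ x : (Metric.sphere (0 : EuclideanSpace ℝ (Fin (d + 1))) 1), g (-x) = π - g x := by
      intro x
      rw [hgdef]
      simp only
      have hc : ∀ y : (Metric.sphere (0 : EuclideanSpace ℝ (Fin (d + 1))) 1), ⟪((-x : (Metric.sphere (0 : EuclideanSpace ℝ (Fin (d + 1))) 1)) : EuclideanSpace ℝ (Fin (d + 1))), (y : EuclideanSpace ℝ (Fin (d + 1)))⟫ = -⟪(x : EuclideanSpace ℝ (Fin (d + 1))), (y : EuclideanSpace ℝ (Fin (d + 1)))⟫ := by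
        intro y
        rw [show ((-x : (Metric.sphere (0 : EuclideanSpace ℝ (Fin (d + 1))) 1)) : EuclideanSpace ℝ (Fin (d + 1))) = -(x : EuclideanSpace ℝ (Fin (d + 1))) from rfl, inner_neg_left]
      have : (fun y : (Metric.sphere (0 : EuclideanSpace ℝ (Fin (d + 1))) 1) => Real.arccos ⟪((-x : (Metric.sphere (0 : EuclideanSpace ℝ (Fin (d + 1))) 1)) : EuclideanSpace ℝ (Fin (d + 1))), (y : EuclideanSpace ℝ (Fin (d + 1)))⟫)
          = fun y : (Metric.sphere (0 : EuclideanSpace ℝ (Fin (d + 1))) 1) => π - Real.arccos ⟪(x : EuclideanSpace ℝ (Fin (d + 1))), (y : EuclideanSpace ℝ (Fin (d + 1)))⟫ := by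
        funext y
        rw [hc y, Real.arccos_neg]
      rw [this, integral_sub (integrable_const _) (integrable_cont μ (hca x)), integral_const]
      simp
    have h2 : ∫ x, g (-x) ∂μ = π - ∫ x, g x ∂μ := by
      have hcongr : ∫ x, g (-x) ∂μ = ∫ x, (π - g x) ∂μ := by
        apply integral_congr_ae
        filter_upwards with x using hgneg x
      rw [hcongr, integral_sub (integrable_const _) hig, integral_const]
      simp
    have h3 : ∫ x, g x ∂μ = π - ∫ x, g x ∂μ := hmap.trans h2
    show ∫ x, g x ∂μ = π/2
    linarith
end
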